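/- arXiv:2301.04080 — 8 statements merged into one kernel-verified Lean document; each statement's English description precedes it below -/
import Mathlib

section
/- For every nonzero integer n: ν_n^h ≠ 0, ν_n^p ≠ 0, ν_n^h ≠ iūn and ν_n^p ≠ iūn (so ν₂ⁿ ≠ ū and ν₁ⁿ ≠ ū); moreover the nonzero vector (ρ̄, ν₂ⁿ − ū) satisfies R_n·(ρ̄, ν₂ⁿ − ū)ᵀ = ν_n^h·(ρ̄, ν₂ⁿ − ū)ᵀ, and the nonzero vector (ρ̄/(ν₁ⁿ − ū), 1) satisfies R_n·(ρ̄/(ν₁ⁿ − ū), 1)ᵀ = ν_n^p·(ρ̄/(ν₁ⁿ − ū), 1)ᵀ. In other words, 0 and iūn are never eigenvalues of R_n, and these vectors are eigenvectors of R_n for the eigenvalues ν_n^h and ν_n^p respectively. -/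
open scoped Classical
open Complex

/-- The hyperbolic branch of eigenvalues of the adjoint operator of the linearized
barotropic compressible Navier–Stokes system. -/
noncomputable def nuH (ρ u b μ : ℝ) (n : ℤ) : ℂ :=
  if 4 * b * ρ ≤ μ ^ 2 * (n : ℝ) ^ 2 then
    (((-(μ * (n : ℝ) ^ 2) + |(n : ℝ)| * Real.sqrt (μ ^ 2 * (n : ℝ) ^ 2 - 4 * b * ρ)) / 2 : ℝ) : ℂ)
      + Complex.I * ((u * (n : ℝ) : ℝ) : ℂ)
  else
    ((-(μ * (n : ℝ) ^ 2) / 2 : ℝ) : ℂ)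
      + Complex.I * ((u * (n : ℝ) + (n : ℝ) / 2 * Real.sqrt (4 * b * ρ - μ ^ 2 * (n : ℝ) ^ 2) : ℝ) : ℂ)

/-- The parabolic branch of eigenvalues. -/
noncomputable def nuP (ρ u b μ : ℝ) (n : ℤ) : ℂ :=
  if 4 * b * ρ ≤ μ ^ 2 * (n : ℝ) ^ 2 then
    (((-(μ * (n : ℝ) ^ 2) - |(n : ℝ)| * Real.sqrt (μ ^ 2 * (n : ℝ) ^ 2 - 4 * b * ρ)) / 2 : ℝ) : ℂ)
      + Complex.I * ((u * (n : ℝ) : ℝ) : ℂ)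
  else
    ((-(μ * (n : ℝ) ^ 2) / 2 : ℝ) : ℂ)
      + Complex.I * ((u * (n : ℝ) - (n : ℝ) / 2 * Real.sqrt (4 * b * ρ - μ ^ 2 * (n : ℝ) ^ 2) : ℝ) : ℂ)

/-- `ν₁ⁿ := ν_n^p / (i n)`. -/
noncomputable def nu1 (ρ u b μ : ℝ) (n : ℤ) : ℂ := nuP ρ u b μ n / (Complex.I * (n : ℂ))

/-- `ν₂ⁿ := ν_n^h / (i n)`. -/
noncomputable def nu2 (ρ u b μ : ℝ) (n : ℤ) : ℂ := nuH ρ u b μ n / (Complex.I * (n : ℂ))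

/-- The matrix `R_n`: first row `(iūn, iρ̄n)`, second row `(ibn, −μ₀n² + iūn)`. -/
noncomputable def Rmat (ρ u b μ : ℝ) (n : ℤ) : Matrix (Fin 2) (Fin 2) ℂ :=
  !![Complex.I * (u : ℂ) * (n : ℂ), Complex.I * (ρ : ℂ) * (n : ℂ);
     Complex.I * (b : ℂ) * (n : ℂ), -(μ : ℂ) * (n : ℂ) ^ 2 + Complex.I * (u : ℂ) * (n : ℂ)]

lemma quad_nu (ρ u b μ : ℝ) (n : ℤ) (ν : ℂ)
    (hν : ν = nuH ρ u b μ n ∨ ν = nuP ρ u b μ n) :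
    (ν - Complex.I * (u : ℂ) * (n : ℂ)) ^ 2
      + (μ : ℂ) * (n : ℂ) ^ 2 * (ν - Complex.I * (u : ℂ) * (n : ℂ))
      + (b : ℂ) * (ρ : ℂ) * (n : ℂ) ^ 2 = 0 := by
  have hI := Complex.I_sq
  rcases hν with h | h <;> rw [h] <;>
      [(unfold nuH); (unfold nuP)] <;> split_ifs with hle
  case pos =>
    have hs : Real.sqrt (μ ^ 2 * (n : ℝ) ^ 2 - 4 * b * ρ) ^ 2
        = μ ^ 2 * (n : ℝ) ^ 2 - 4 * b * ρ := Real.sq_sqrt (by linarith)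
    have hs' := congrArg (Complex.ofReal) hs
    have habs' : ((|(n : ℝ)| : ℝ) : ℂ) ^ 2 = (n : ℂ) ^ 2 := by
      rw [← Complex.ofReal_pow, _root_.sq_abs]; push_cast; ring
    push_cast at hs' ⊢
    linear_combination ((n : ℂ) ^ 2 / 4) * hs'
      + (((Real.sqrt (μ ^ 2 * (n : ℝ) ^ 2 - 4 * b * ρ) : ℝ) : ℂ) ^ 2 / 4) * habs'
  case neg =>
    have hs : Real.sqrt (4 * b * ρ - μ ^ 2 * (n : ℝ) ^ 2) ^ 2
        = 4 * b * ρ - μ ^ 2 * (n : ℝ) ^ 2 := Real.sq_sqrt (by push_neg at hle; linarith)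
    have hs' := congrArg (Complex.ofReal) hs
    push_cast at hs' ⊢
    linear_combination (Complex.I ^ 2 * (n : ℂ) ^ 2 / 4) * hs'
      + ((n : ℂ) ^ 2 * (4 * b * ρ - μ ^ 2 * (n : ℂ) ^ 2) / 4) * hI
  case pos =>
    have hs : Real.sqrt (μ ^ 2 * (n : ℝ) ^ 2 - 4 * b * ρ) ^ 2
        = μ ^ 2 * (n : ℝ) ^ 2 - 4 * b * ρ := Real.sq_sqrt (by linarith)
    have hs' := congrArg (Complex.ofReal) hs
    have habs' : ((|(n : ℝ)| : ℝ) : ℂ) ^ 2 = (n : ℂ) ^ 2 := by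
      rw [← Complex.ofReal_pow, _root_.sq_abs]; push_cast; ring
    push_cast at hs' ⊢
    linear_combination ((n : ℂ) ^ 2 / 4) * hs'
      + (((Real.sqrt (μ ^ 2 * (n : ℝ) ^ 2 - 4 * b * ρ) : ℝ) : ℂ) ^ 2 / 4) * habs'
  case neg =>
    have hs : Real.sqrt (4 * b * ρ - μ ^ 2 * (n : ℝ) ^ 2) ^ 2
        = 4 * b * ρ - μ ^ 2 * (n : ℝ) ^ 2 := Real.sq_sqrt (by push_neg at hle; linarith)
    have hs' := congrArg (Complex.ofReal) hs
    push_cast at hs' ⊢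
    linear_combination (Complex.I ^ 2 * (n : ℂ) ^ 2 / 4) * hs'
      + ((n : ℂ) ^ 2 * (4 * b * ρ - μ ^ 2 * (n : ℂ) ^ 2) / 4) * hI
lemma nu_sub_ne (ρ u b μ : ℝ) (hρ : 0 < ρ) (hb : 0 < b) (n : ℤ) (hn : n ≠ 0) (ν : ℂ)
    (hν : ν = nuH ρ u b μ n ∨ ν = nuP ρ u b μ n) :
    ν - Complex.I * (u : ℂ) * (n : ℂ) ≠ 0 := by
  intro h0
  have q := quad_nu ρ u b μ n ν hν
  rw [h0] at q
  have hnC : (n : ℂ) ≠ 0 := Int.cast_ne_zero.mpr hn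
  have : (b : ℂ) * (ρ : ℂ) * (n : ℂ) ^ 2 ≠ 0 := by
    apply mul_ne_zero (mul_ne_zero _ _) (pow_ne_zero _ hnC) <;>
      simp [Complex.ofReal_ne_zero, hb.ne', hρ.ne']
  apply this; linear_combination q

lemma nu_ne_zero (ρ u b μ : ℝ) (hρ : 0 < ρ) (hu : 0 < u) (hb : 0 < b) (hμ : 0 < μ)
    (n : ℤ) (hn : n ≠ 0) (ν : ℂ)
    (hν : ν = nuH ρ u b μ n ∨ ν = nuP ρ u b μ n) : ν ≠ 0 := by
  intro h0
  have q := quad_nu ρ u b μ n ν hν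
  rw [h0] at q
  have h3 : ((b * ρ * (n : ℝ) ^ 2 - u ^ 2 * (n : ℝ) ^ 2 : ℝ) : ℂ)
      + ((-(μ * u * (n : ℝ) ^ 3) : ℝ) : ℂ) * Complex.I = 0 := by
    push_cast
    linear_combination q - (u : ℂ) ^ 2 * (n : ℂ) ^ 2 * Complex.I_sq
  have him := congrArg Complex.im h3
  simp only [Complex.add_im, Complex.mul_im, Complex.ofReal_im, Complex.ofReal_re,
    Complex.I_im, Complex.I_re, mul_zero, mul_one, zero_add, add_zero, zero_mul,
    Complex.zero_im] at him
  have hnR : (n : ℝ) ≠ 0 := Int.cast_ne_zero.mpr hn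
  have : μ * u * (n : ℝ) ^ 3 ≠ 0 :=
    mul_ne_zero (mul_ne_zero hμ.ne' hu.ne') (pow_ne_zero _ hnR)
  exact this (by linarith)

/-- For every nonzero integer `n`: `ν_n^h`, `ν_n^p` are nonzero and different from `iūn`
(so `ν₂ⁿ ≠ ū` and `ν₁ⁿ ≠ ū`), and the nonzero vectors `(ρ̄, ν₂ⁿ − ū)` and
`(ρ̄/(ν₁ⁿ − ū), 1)` are eigenvectors of `R_n` for the eigenvalues `ν_n^h` and `ν_n^p`. -/
theorem eigenvectors_of_Rmat (ρ u b μ : ℝ) (hρ : 0 < ρ) (hu : 0 < u) (hb : 0 < b) (hμ : 0 < μ)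
    (n : ℤ) (hn : n ≠ 0) :
    nuH ρ u b μ n ≠ 0 ∧ nuP ρ u b μ n ≠ 0 ∧
    nuH ρ u b μ n ≠ Complex.I * (u : ℂ) * (n : ℂ) ∧
    nuP ρ u b μ n ≠ Complex.I * (u : ℂ) * (n : ℂ) ∧
    nu2 ρ u b μ n ≠ (u : ℂ) ∧ nu1 ρ u b μ n ≠ (u : ℂ) ∧
    (![(ρ : ℂ), nu2 ρ u b μ n - (u : ℂ)] : Fin 2 → ℂ) ≠ 0 ∧
    (Rmat ρ u b μ n).mulVec ![(ρ : ℂ), nu2 ρ u b μ n - (u : ℂ)]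
      = nuH ρ u b μ n • ![(ρ : ℂ), nu2 ρ u b μ n - (u : ℂ)] ∧
    (![(ρ : ℂ) / (nu1 ρ u b μ n - (u : ℂ)), 1] : Fin 2 → ℂ) ≠ 0 ∧
    (Rmat ρ u b μ n).mulVec ![(ρ : ℂ) / (nu1 ρ u b μ n - (u : ℂ)), 1]
      = nuP ρ u b μ n • ![(ρ : ℂ) / (nu1 ρ u b μ n - (u : ℂ)), 1] := by
  have hnC : (n : ℂ) ≠ 0 := Int.cast_ne_zero.mpr hn
  have hiN : Complex.I * (n : ℂ) ≠ 0 := mul_ne_zero Complex.I_ne_zero hnC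
  have hρC : (ρ : ℂ) ≠ 0 := Complex.ofReal_ne_zero.mpr hρ.ne'
  have qh := quad_nu ρ u b μ n _ (Or.inl rfl)
  have qp := quad_nu ρ u b μ n _ (Or.inr rfl)
  have whne := nu_sub_ne ρ u b μ hρ hb n hn _ (Or.inl rfl)
  have wpne := nu_sub_ne ρ u b μ hρ hb n hn _ (Or.inr rfl)
  have hν2 : nu2 ρ u b μ n - (u : ℂ)
      = (nuH ρ u b μ n - Complex.I * (u : ℂ) * (n : ℂ)) / (Complex.I * (n : ℂ)) := by
    unfold nu2; field_simp
  have hν1 : nu1 ρ u b μ n - (u : ℂ)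
      = (nuP ρ u b μ n - Complex.I * (u : ℂ) * (n : ℂ)) / (Complex.I * (n : ℂ)) := by
    unfold nu1; field_simp
  have h2ne : nu2 ρ u b μ n - (u : ℂ) ≠ 0 := by
    rw [hν2]; exact div_ne_zero whne hiN
  have h1ne : nu1 ρ u b μ n - (u : ℂ) ≠ 0 := by
    rw [hν1]; exact div_ne_zero wpne hiN
  refine ⟨nu_ne_zero ρ u b μ hρ hu hb hμ n hn _ (Or.inl rfl),
    nu_ne_zero ρ u b μ hρ hu hb hμ n hn _ (Or.inr rfl),
    sub_ne_zero.mp whne, sub_ne_zero.mp wpne,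
    sub_ne_zero.mp h2ne, sub_ne_zero.mp h1ne, ?_, ?_, ?_, ?_⟩
  · intro h
    have := congrFun h 0
    simp at this
    exact hρC (by exact_mod_cast this)
  · funext i
    fin_cases i <;>
      simp [Rmat, Matrix.mulVec, dotProduct, Fin.sum_univ_two] <;>
      rw [hν2] <;> field_simp
    · ring
    · linear_combination -qh + (b : ℂ) * (ρ : ℂ) * (n : ℂ) ^ 2 * Complex.I_sq
  · intro h
    have := congrFun h 1
    simp at this
  · funext i
    fin_cases i <;>
      simp [Rmat, Matrix.mulVec, dotProduct, Fin.sum_univ_two] <;>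
      rw [hν1] <;> field_simp
    · ring
    · have wp' : nuP ρ u b μ n - (n : ℂ) * Complex.I * (u : ℂ) ≠ 0 := by
        intro h; apply wpne; linear_combination h
      field_simp
      linear_combination -qp + (b : ℂ) * (ρ : ℂ) * (n : ℂ) ^ 2 * Complex.I_sq
end

section
/- Let n and l be nonzero integers. (a) If μ₀²n² = 4bρ̄ then ν_n^h = ν_n^p = −μ₀n²/2 + iūn (the two branches of eigenvalues merge). (b) If μ₀²n² > 4bρ̄ and μ₀²l² > 4bρ̄, then ν_n^h ≠ ν_l^p. (c) If μ₀²n² < 4bρ̄ and μ₀²l² < 4bρ̄, then ν_n^h ≠ ν_l^p. -/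
open scoped Classical
open Complex

/-- (a) If `μ₀²n² = 4bρ̄` the two branches merge: `ν_n^h = ν_n^p = −μ₀n²/2 + iūn`.
(b) If `μ₀²n² > 4bρ̄` and `μ₀²l² > 4bρ̄` then `ν_n^h ≠ ν_l^p`.
(c) If `μ₀²n² < 4bρ̄` and `μ₀²l² < 4bρ̄` then `ν_n^h ≠ ν_l^p`. -/
theorem hyperbolic_vs_parabolic (ρ u b μ : ℝ) (hρ : 0 < ρ) (hu : 0 < u) (hb : 0 < b)
    (hμ : 0 < μ) (n l : ℤ) (hn : n ≠ 0) (hl : l ≠ 0) :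
    (μ ^ 2 * (n : ℝ) ^ 2 = 4 * b * ρ →
      nuH ρ u b μ n = nuP ρ u b μ n ∧
      nuH ρ u b μ n = ((-(μ * (n : ℝ) ^ 2) / 2 : ℝ) : ℂ)
        + Complex.I * (u : ℂ) * (n : ℂ)) ∧
    (4 * b * ρ < μ ^ 2 * (n : ℝ) ^ 2 → 4 * b * ρ < μ ^ 2 * (l : ℝ) ^ 2 →
      nuH ρ u b μ n ≠ nuP ρ u b μ l) ∧
    (μ ^ 2 * (n : ℝ) ^ 2 < 4 * b * ρ → μ ^ 2 * (l : ℝ) ^ 2 < 4 * b * ρ →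
      nuH ρ u b μ n ≠ nuP ρ u b μ l) := by
  have hnR : ((n:ℝ)) ≠ 0 := Int.cast_ne_zero.mpr hn
  have hlR : ((l:ℝ)) ≠ 0 := Int.cast_ne_zero.mpr hl
  refine ⟨?_, ?_, ?_⟩
  · intro heq
    have h1 : (4:ℝ) * b * ρ ≤ μ ^ 2 * (n:ℝ) ^ 2 := le_of_eq heq.symm
    have hs : Real.sqrt (μ ^ 2 * (n:ℝ) ^ 2 - 4 * b * ρ) = 0 := by
      rw [show μ ^ 2 * (n:ℝ) ^ 2 - 4 * b * ρ = 0 by linarith, Real.sqrt_zero]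
    constructor
    · rw [nuH, nuP, if_pos h1, if_pos h1, hs]
      ring
    · rw [nuH, if_pos h1, hs]
      push_cast
      ring
  · intro hn2 hl2
    have hqn : 0 < Real.sqrt (μ ^ 2 * (n:ℝ) ^ 2 - 4 * b * ρ) :=
      Real.sqrt_pos.mpr (by linarith)
    rw [nuH, nuP, if_pos hn2.le, if_pos hl2.le]
    intro h
    rw [Complex.ext_iff] at h
    simp only [Complex.add_re, Complex.add_im, Complex.ofReal_re, Complex.ofReal_im,
      Complex.mul_re, Complex.mul_im, Complex.I_re, Complex.I_im] at h
    obtain ⟨hre, him⟩ := h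
    have hnl : (n:ℝ) = (l:ℝ) := by
      have : u * (n:ℝ) = u * (l:ℝ) := by linarith
      exact mul_left_cancel₀ hu.ne' this
    rw [← hnl] at hre
    have habs : 0 < |(n:ℝ)| := abs_pos.mpr hnR
    nlinarith [habs, hqn]
  · intro hn2 hl2
    have hqn : 0 < Real.sqrt (4 * b * ρ - μ ^ 2 * (n:ℝ) ^ 2) :=
      Real.sqrt_pos.mpr (by linarith)
    rw [nuH, nuP, if_neg (not_le.mpr hn2), if_neg (not_le.mpr hl2)]
    intro h
    rw [Complex.ext_iff] at h
    simp only [Complex.add_re, Complex.add_im, Complex.ofReal_re, Complex.ofReal_im,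
      Complex.mul_re, Complex.mul_im, Complex.I_re, Complex.I_im] at h
    obtain ⟨hre, him⟩ := h
    have hsq : (n:ℝ) ^ 2 = (l:ℝ) ^ 2 := by
      have hμ2 : μ ≠ 0 := hμ.ne'
      have h2 : μ * (n:ℝ) ^ 2 = μ * (l:ℝ) ^ 2 := by linarith
      exact mul_left_cancel₀ hμ2 h2
    have hql : Real.sqrt (4 * b * ρ - μ ^ 2 * (l:ℝ) ^ 2)
        = Real.sqrt (4 * b * ρ - μ ^ 2 * (n:ℝ) ^ 2) := by rw [hsq]
    rw [hql] at him
    rcases sq_eq_sq_iff_eq_or_eq_neg.mp hsq with hcase | hcase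
    · rw [← hcase] at him
      have : (n:ℝ) * Real.sqrt (4 * b * ρ - μ ^ 2 * (n:ℝ) ^ 2) = 0 := by linarith
      rcases mul_eq_zero.mp this with h' | h'
      · exact hnR h'
      · exact hqn.ne' h'
    · rw [hcase] at him
      have : 2 * u * (l:ℝ) = 0 := by linarith
      have : (l:ℝ) = 0 := by
        rcases mul_eq_zero.mp this with h' | h'
        · rcases mul_eq_zero.mp h' with h'' | h''
          · norm_num at h''
          · exact absurd h'' hu.ne'
        · exact h'
      exact hlR this
end

section
/- There exists a constant C > 0 such that for every nonzero integer n the boundary observation terms of the eigenfunctions satisfy: |ρ̄·ν₂ⁿ| ≥ C, |ρ̄·ν₁ⁿ/(ν₁ⁿ − ū)| ≥ C, |ν₂ⁿ·(ν₂ⁿ − ū)| ≥ C/|n|, and |ν₁ⁿ| ≥ C·|n|. In particular all four quantities are nonzero for every nonzero integer n. -/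
open scoped Classical
open Complex

lemma cplx_ne (e f : ℝ) (h : e ≠ 0 ∨ f ≠ 0) : (e:ℂ) + Complex.I*(f:ℂ) ≠ 0 := by
  intro h0
  rw [Complex.ext_iff] at h0
  simp at h0
  rcases h with h | h <;> simp_all

lemma div_explicit (p q e f : ℝ) (h : (e:ℂ) + Complex.I*(f:ℂ) ≠ 0) :
    ((p:ℂ) + Complex.I*(q:ℂ)) / ((e:ℂ) + Complex.I*(f:ℂ))
      = (((p*e+q*f)/(e^2+f^2) : ℝ):ℂ) + Complex.I * (((q*e-p*f)/(e^2+f^2) : ℝ):ℂ) := by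
  have hef : e^2 + f^2 ≠ 0 := by
    intro h0
    apply h
    have he : e = 0 := by nlinarith [sq_nonneg e, sq_nonneg f]
    have hf : f = 0 := by nlinarith [sq_nonneg e, sq_nonneg f]
    simp [he, hf]
  rw [eq_comm, eq_div_iff h, Complex.ext_iff]
  constructor <;>
    simp only [Complex.add_re, Complex.add_im, Complex.mul_re, Complex.mul_im,
      Complex.I_re, Complex.I_im, Complex.ofReal_re, Complex.ofReal_im] <;>
    field_simp <;> ring

lemma div_I_explicit (p q f : ℝ) (hf : f ≠ 0) :
    ((p:ℂ) + Complex.I*(q:ℂ)) / (Complex.I*(f:ℂ))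
      = ((q/f : ℝ):ℂ) + Complex.I * ((-(p/f) : ℝ):ℂ) := by
  have h : ((0:ℝ):ℂ) + Complex.I*(f:ℂ) ≠ 0 := cplx_ne 0 f (Or.inr hf)
  have hrw : Complex.I*(f:ℂ) = ((0:ℝ):ℂ) + Complex.I*(f:ℂ) := by simp
  rw [hrw, div_explicit p q 0 f h]
  have e1 : (p*0+q*f)/(0^2+f^2) = q/f := by field_simp; ring
  have e2 : (q*0-p*f)/(0^2+f^2) = -(p/f) := by field_simp; ring
  rw [e1, e2]

lemma abs_re_ge (x y : ℝ) : |x| ≤ ‖(x:ℂ) + Complex.I*(y:ℂ)‖ := by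
  have h := Complex.abs_re_le_norm ((x:ℂ) + Complex.I*(y:ℂ))
  simpa using h

lemma abs_im_ge (x y : ℝ) : |y| ≤ ‖(x:ℂ) + Complex.I*(y:ℂ)‖ := by
  have h := Complex.abs_im_le_norm ((x:ℂ) + Complex.I*(y:ℂ))
  simpa using h

lemma abs_exact (x y : ℝ) : ‖(x:ℂ) + Complex.I*(y:ℂ)‖ = Real.sqrt (x^2+y^2) := by
  rw [mul_comm, Complex.norm_add_mul_I]

lemma ne_zero_of_abs_ge {z : ℂ} {c : ℝ} (hc : 0 < c) (h : c ≤ ‖z‖) : z ≠ 0 := by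
  intro h0
  rw [h0] at h
  simp at h
  linarith

set_option maxHeartbeats 1000000 in
/-- Lower bounds for the boundary observation terms of the eigenfunctions:
`|ρ̄ν₂ⁿ| ≥ C`, `|ρ̄ν₁ⁿ/(ν₁ⁿ−ū)| ≥ C`, `|ν₂ⁿ(ν₂ⁿ−ū)| ≥ C/|n|`, `|ν₁ⁿ| ≥ C|n|`;
in particular all four quantities are nonzero. -/
theorem observation_estimates (ρ u b μ : ℝ) (hρ : 0 < ρ) (hu : 0 < u) (hb : 0 < b)
    (hμ : 0 < μ) :
    ∃ C > 0, ∀ n : ℤ, n ≠ 0 →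
      C ≤ ‖(ρ : ℂ) * nu2 ρ u b μ n‖ ∧
      C ≤ ‖(ρ : ℂ) * nu1 ρ u b μ n / (nu1 ρ u b μ n - (u : ℂ))‖ ∧
      C / |(n : ℝ)| ≤ ‖nu2 ρ u b μ n * (nu2 ρ u b μ n - (u : ℂ))‖ ∧
      C * |(n : ℝ)| ≤ ‖nu1 ρ u b μ n‖ ∧
      (ρ : ℂ) * nu2 ρ u b μ n ≠ 0 ∧
      (ρ : ℂ) * nu1 ρ u b μ n / (nu1 ρ u b μ n - (u : ℂ)) ≠ 0 ∧
      nu2 ρ u b μ n * (nu2 ρ u b μ n - (u : ℂ)) ≠ 0 ∧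
      nu1 ρ u b μ n ≠ 0 := by
  refine ⟨min (min (ρ*u) ρ) (min (min (u*μ/(2*b)) (u*(b*ρ)/μ)) (min (u*Real.sqrt (b*ρ)) (μ/2))),
    by positivity, ?_⟩
  set C := min (min (ρ*u) ρ) (min (min (u*μ/(2*b)) (u*(b*ρ)/μ)) (min (u*Real.sqrt (b*ρ)) (μ/2)))
    with hCdef
  have hC : 0 < C := by rw [hCdef]; positivity
  have hC1 : C ≤ ρ*u := le_trans (min_le_left _ _) (min_le_left _ _)
  have hC2 : C ≤ ρ := le_trans (min_le_left _ _) (min_le_right _ _)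
  have hC3 : C ≤ u*μ/(2*b) :=
    le_trans (min_le_right _ _) (le_trans (min_le_left _ _) (min_le_left _ _))
  have hC4 : C ≤ u*(b*ρ)/μ :=
    le_trans (min_le_right _ _) (le_trans (min_le_left _ _) (min_le_right _ _))
  have hC5 : C ≤ u*Real.sqrt (b*ρ) :=
    le_trans (min_le_right _ _) (le_trans (min_le_right _ _) (min_le_left _ _))
  have hC6 : C ≤ μ/2 :=
    le_trans (min_le_right _ _) (le_trans (min_le_right _ _) (min_le_right _ _))
  intro n hn
  have hN0 : (n:ℝ) ≠ 0 := Int.cast_ne_zero.mpr hn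
  have hN1 : (1:ℝ) ≤ |(n:ℝ)| := by exact_mod_cast Int.one_le_abs hn
  have hNpos : (0:ℝ) < |(n:ℝ)| := lt_of_lt_of_le one_pos hN1
  have hNsq : |(n:ℝ)|^2 = (n:ℝ)^2 := sq_abs _
  have hN2 : (0:ℝ) < (n:ℝ)^2 := by nlinarith
  have hcastn : ((n:ℤ):ℂ) = (((n:ℝ)):ℂ) := by push_cast; ring
  by_cases h : 4 * b * ρ ≤ μ ^ 2 * (n : ℝ) ^ 2
  · -- hyperbolic regime: both eigenvalues real (modulo the iūn shift)
    set s := Real.sqrt (μ ^ 2 * (n : ℝ) ^ 2 - 4 * b * ρ) with hsdef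
    have hs0 : 0 ≤ s := Real.sqrt_nonneg _
    have hss : s^2 = μ ^ 2 * (n : ℝ) ^ 2 - 4 * b * ρ := Real.sq_sqrt (by linarith)
    have e2 : nu2 ρ u b μ n
        = ((u:ℝ):ℂ) + Complex.I * ((-(((-(μ * (n:ℝ)^2) + |(n:ℝ)| * s)/2)/(n:ℝ)) : ℝ):ℂ) := by
      rw [nu2, nuH, if_pos h, hcastn, div_I_explicit _ _ _ hN0]
      congr 2
      exact mul_div_cancel_right₀ u hN0
    have e1 : nu1 ρ u b μ n
        = ((u:ℝ):ℂ) + Complex.I * ((-(((-(μ * (n:ℝ)^2) - |(n:ℝ)| * s)/2)/(n:ℝ)) : ℝ):ℂ) := by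
      rw [nu1, nuP, if_pos h, hcastn, div_I_explicit _ _ _ hN0]
      congr 2
      exact mul_div_cancel_right₀ u hN0
    set a := (-(μ * (n:ℝ)^2) + |(n:ℝ)| * s)/2 with hadef
    set c := (-(μ * (n:ℝ)^2) - |(n:ℝ)| * s)/2 with hcdef
    have ha : b*ρ/μ ≤ -a := by
      rw [div_le_iff₀ hμ, hadef]
      nlinarith [sq_nonneg (μ*|(n:ℝ)| - s)]
    have hc : μ*(n:ℝ)^2/2 ≤ -c := by
      rw [hcdef]
      nlinarith [mul_nonneg (abs_nonneg (n:ℝ)) hs0]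
    have haneg : a < 0 := by nlinarith [div_pos (mul_pos hb hρ) hμ]
    have hcneg : c < 0 := by nlinarith
    -- item 1
    have r1 : (ρ:ℂ) * nu2 ρ u b μ n
        = ((ρ*u:ℝ):ℂ) + Complex.I * ((ρ*(-(a/(n:ℝ))):ℝ):ℂ) := by
      rw [e2]; push_cast; ring
    have i1 : C ≤ ‖(ρ:ℂ) * nu2 ρ u b μ n‖ := by
      rw [r1]
      calc C ≤ ρ*u := hC1
        _ ≤ |ρ*u| := le_abs_self _
        _ ≤ _ := abs_re_ge _ _
    -- item 2
    have hd1 : -(c/(n:ℝ)) ≠ 0 := neg_ne_zero.mpr (div_ne_zero (ne_of_lt hcneg) hN0)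
    have r2a : nu1 ρ u b μ n - (u:ℂ) = Complex.I * ((-(c/(n:ℝ)):ℝ):ℂ) := by
      rw [e1]; push_cast; ring
    have r2b : (ρ:ℂ) * nu1 ρ u b μ n
        = ((ρ*u:ℝ):ℂ) + Complex.I * ((ρ*(-(c/(n:ℝ))):ℝ):ℂ) := by
      rw [e1]; push_cast; ring
    have i2 : C ≤ ‖(ρ:ℂ) * nu1 ρ u b μ n / (nu1 ρ u b μ n - (u:ℂ))‖ := by
      rw [r2b, r2a, div_I_explicit _ _ _ hd1]
      calc C ≤ ρ := hC2
        _ = |ρ*(-(c/(n:ℝ)))/(-(c/(n:ℝ)))| := by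
            rw [mul_div_assoc, div_self hd1, mul_one, abs_of_pos hρ]
        _ ≤ _ := abs_re_ge _ _
    -- item 3
    have r3 : nu2 ρ u b μ n - (u:ℂ) = Complex.I * ((-(a/(n:ℝ)):ℝ):ℂ) := by
      rw [e2]; push_cast; ring
    have hu2 : u ≤ ‖nu2 ρ u b μ n‖ := by
      rw [e2]
      calc u = |u| := (abs_of_pos hu).symm
        _ ≤ _ := abs_re_ge _ _
    have hval : |(-(a/(n:ℝ)))| = (-a)/|(n:ℝ)| := by
      rw [abs_neg, abs_div, abs_of_neg haneg]
    have i3 : C / |(n:ℝ)| ≤ ‖nu2 ρ u b μ n * (nu2 ρ u b μ n - (u:ℂ))‖ := by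
      have habs2 : ‖nu2 ρ u b μ n * (nu2 ρ u b μ n - (u:ℂ))‖
          = ‖nu2 ρ u b μ n‖ * ((-a)/|(n:ℝ)|) := by
        rw [r3, norm_mul, norm_mul, Complex.norm_I, Complex.norm_real, Real.norm_eq_abs, one_mul, hval]
      rw [habs2]
      calc C / |(n:ℝ)| ≤ (u*(b*ρ)/μ) / |(n:ℝ)| := by gcongr
        _ = u * ((b*ρ/μ)/|(n:ℝ)|) := by ring
        _ ≤ ‖nu2 ρ u b μ n‖ * ((-a)/|(n:ℝ)|) := by
            apply mul_le_mul hu2 (by gcongr) (by positivity)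
            exact (norm_nonneg _)
    -- item 4
    have i4 : C * |(n:ℝ)| ≤ ‖nu1 ρ u b μ n‖ := by
      rw [e1]
      calc C * |(n:ℝ)| ≤ (μ/2) * |(n:ℝ)| := by gcongr
        _ ≤ (-c)/|(n:ℝ)| := by
            rw [le_div_iff₀ hNpos]
            nlinarith
        _ = |(-(c/(n:ℝ)))| := by rw [abs_neg, abs_div, abs_of_neg hcneg]
        _ ≤ _ := abs_im_ge _ _
    exact ⟨i1, i2, i3, i4, ne_zero_of_abs_ge hC i1, ne_zero_of_abs_ge hC i2,
      ne_zero_of_abs_ge (div_pos hC hNpos) i3,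
      ne_zero_of_abs_ge (mul_pos hC hNpos) i4⟩
  · -- oscillatory regime
    have hlt : μ ^ 2 * (n : ℝ) ^ 2 < 4 * b * ρ := lt_of_not_ge h
    set t := Real.sqrt (4 * b * ρ - μ ^ 2 * (n : ℝ) ^ 2) with htdef
    have ht0 : 0 ≤ t := Real.sqrt_nonneg _
    have htt : t^2 = 4 * b * ρ - μ ^ 2 * (n : ℝ) ^ 2 := Real.sq_sqrt (by linarith)
    have e2 : nu2 ρ u b μ n
        = ((u + t/2 : ℝ):ℂ) + Complex.I * ((μ*(n:ℝ)/2 : ℝ):ℂ) := by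
      rw [nu2, nuH, if_neg h, hcastn, div_I_explicit _ _ _ hN0]
      congr 2 <;>
        first
          | rfl
          | (apply Complex.ofReal_inj.mpr; field_simp; ring)
          | (field_simp [hN0]; rw [htdef]; ring_nf)
          | field_simp [hN0]
          | (field_simp [hN0]; ring)
    have e1 : nu1 ρ u b μ n
        = ((u - t/2 : ℝ):ℂ) + Complex.I * ((μ*(n:ℝ)/2 : ℝ):ℂ) := by
      rw [nu1, nuP, if_neg h, hcastn, div_I_explicit _ _ _ hN0]
      congr 2 <;>
        first
          | rfl
          | (apply Complex.ofReal_inj.mpr; field_simp; ring)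
          | (field_simp [hN0]; rw [htdef]; ring_nf)
          | field_simp [hN0]
          | (field_simp [hN0]; ring)
    have hfne : μ*(n:ℝ)/2 ≠ 0 := by positivity
    have hS : (-(t/2))^2 + (μ*(n:ℝ)/2)^2 = b*ρ := by nlinarith
    -- item 1
    have r1 : (ρ:ℂ) * nu2 ρ u b μ n
        = ((ρ*(u + t/2):ℝ):ℂ) + Complex.I * ((ρ*(μ*(n:ℝ)/2):ℝ):ℂ) := by
      rw [e2]; push_cast; ring
    have i1 : C ≤ ‖(ρ:ℂ) * nu2 ρ u b μ n‖ := by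
      rw [r1]
      calc C ≤ ρ*u := hC1
        _ ≤ ρ*(u + t/2) := by nlinarith
        _ ≤ |ρ*(u + t/2)| := le_abs_self _
        _ ≤ _ := abs_re_ge _ _
    -- item 2
    have r2a : nu1 ρ u b μ n - (u:ℂ)
        = ((-(t/2):ℝ):ℂ) + Complex.I * ((μ*(n:ℝ)/2:ℝ):ℂ) := by
      rw [e1]; push_cast; ring
    have r2b : (ρ:ℂ) * nu1 ρ u b μ n
        = ((ρ*(u - t/2):ℝ):ℂ) + Complex.I * ((ρ*(μ*(n:ℝ)/2):ℝ):ℂ) := by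
      rw [e1]; push_cast; ring
    have hden : ((-(t/2):ℝ):ℂ) + Complex.I * ((μ*(n:ℝ)/2:ℝ):ℂ) ≠ 0 :=
      cplx_ne _ _ (Or.inr hfne)
    have i2 : C ≤ ‖(ρ:ℂ) * nu1 ρ u b μ n / (nu1 ρ u b μ n - (u:ℂ))‖ := by
      rw [r2b, r2a, div_explicit _ _ _ _ hden]
      have hYval : (ρ*(μ*(n:ℝ)/2)*(-(t/2)) - ρ*(u - t/2)*(μ*(n:ℝ)/2))
            /((-(t/2))^2 + (μ*(n:ℝ)/2)^2) = -((u*μ/(2*b))*(n:ℝ)) := by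
        rw [hS]; field_simp; ring
      calc C ≤ u*μ/(2*b) := hC3
        _ ≤ (u*μ/(2*b)) * |(n:ℝ)| := le_mul_of_one_le_right (by positivity) hN1
        _ = |(ρ*(μ*(n:ℝ)/2)*(-(t/2)) - ρ*(u - t/2)*(μ*(n:ℝ)/2))
              /((-(t/2))^2 + (μ*(n:ℝ)/2)^2)| := by
            rw [hYval, abs_neg, abs_mul, abs_of_pos (by positivity : (0:ℝ) < u*μ/(2*b))]
        _ ≤ _ := abs_im_ge _ _
    -- item 3
    have r3 : nu2 ρ u b μ n - (u:ℂ)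
        = ((t/2:ℝ):ℂ) + Complex.I * ((μ*(n:ℝ)/2:ℝ):ℂ) := by
      rw [e2]; push_cast; ring
    have hu2 : u ≤ ‖nu2 ρ u b μ n‖ := by
      rw [e2]
      calc u ≤ u + t/2 := by linarith
        _ ≤ |u + t/2| := le_abs_self _
        _ ≤ _ := abs_re_ge _ _
    have habs3 : ‖nu2 ρ u b μ n - (u:ℂ)‖ = Real.sqrt (b*ρ) := by
      rw [r3, abs_exact]
      congr 1
      nlinarith
    have i3 : C / |(n:ℝ)| ≤ ‖nu2 ρ u b μ n * (nu2 ρ u b μ n - (u:ℂ))‖ := by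
      rw [norm_mul, habs3]
      calc C / |(n:ℝ)| ≤ C := div_le_self hC.le hN1
        _ ≤ u * Real.sqrt (b*ρ) := hC5
        _ ≤ _ := by
            apply mul_le_mul hu2 le_rfl (Real.sqrt_nonneg _) (norm_nonneg _)
    -- item 4
    have i4 : C * |(n:ℝ)| ≤ ‖nu1 ρ u b μ n‖ := by
      rw [e1]
      calc C * |(n:ℝ)| ≤ (μ/2) * |(n:ℝ)| := by gcongr
        _ = |μ*(n:ℝ)/2| := by
            rw [abs_div, abs_mul, abs_of_pos hμ, abs_of_pos (by norm_num : (0:ℝ) < 2)]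
            ring
        _ ≤ _ := abs_im_ge _ _
    exact ⟨i1, i2, i3, i4, ne_zero_of_abs_ge hC i1, ne_zero_of_abs_ge hC i2,
      ne_zero_of_abs_ge (div_pos hC hNpos) i3,
      ne_zero_of_abs_ge (mul_pos hC hNpos) i4⟩
end

section
/- There exists a constant C > 0 such that for every nonzero integer n with μ₀²n² ≥ 4bρ̄, the hyperbolic eigenvalue satisfies |ν_n^h − (iūn − ω₀)| ≤ C/n². Consequently the family e_n := ν_n^h − iūn + ω₀ is square-summable over such n. -/
open scoped Classical
open Complex

lemma key_est (ρ u b μ : ℝ) (hρ : 0 < ρ) (hb : 0 < b) (hμ : 0 < μ)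
    (n : ℤ) (hn : n ≠ 0) (h : 4 * b * ρ ≤ μ ^ 2 * (n : ℝ) ^ 2) :
    ‖nuH ρ u b μ n - (Complex.I * (u : ℂ) * (n : ℂ) - ((b * ρ / μ : ℝ) : ℂ))‖
      ≤ (4 * b ^ 2 * ρ ^ 2 / μ ^ 3) / (n : ℝ) ^ 2 := by
  set x : ℝ := (n : ℝ) with hx
  have hx0 : x ≠ 0 := Int.cast_ne_zero.mpr hn
  have hx2 : 0 < x ^ 2 := by positivity
  set s : ℝ := Real.sqrt (μ ^ 2 * x ^ 2 - 4 * b * ρ) with hsdef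
  have hs0 : 0 ≤ s := Real.sqrt_nonneg _
  have hs2 : s ^ 2 = μ ^ 2 * x ^ 2 - 4 * b * ρ := Real.sq_sqrt (by linarith)
  set a : ℝ := |x| with ha
  have hxs : a ^ 2 = x ^ 2 := sq_abs x
  have ha0 : 0 ≤ a := abs_nonneg x
  set D : ℝ := μ * x ^ 2 + a * s with hD
  have hDge : μ * x ^ 2 ≤ D := by
    have h1 : 0 ≤ a * s := mul_nonneg ha0 hs0
    rw [hD]; linarith
  have hD0 : 0 < D := lt_of_lt_of_le (by positivity) hDge
  have hval : nuH ρ u b μ n - (Complex.I * (u : ℂ) * (n : ℂ) - ((b * ρ / μ : ℝ) : ℂ))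
      = ((((-(μ * x ^ 2) + a * s) / 2 + b * ρ / μ : ℝ)) : ℂ) := by
    rw [nuH, if_pos h]
    rw [← hx, ← hsdef, ← ha]
    push_cast
    rw [show ((x:ℂ)) = ((n:ℤ):ℂ) by rw [hx]; norm_cast]
    ring
  rw [hval, Complex.norm_real, Real.norm_eq_abs]
  have hident : (-(μ * x ^ 2) + a * s) / 2 + b * ρ / μ
      = -(4 * b ^ 2 * ρ ^ 2 * x ^ 2) / (μ * D ^ 2) := by
    rw [div_add_div _ _ two_ne_zero hμ.ne', div_eq_div_iff (by positivity) (by positivity), hD]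
    linear_combination (μ * (μ * a * s + μ ^ 2 * x ^ 2 + 2 * b * ρ) * x ^ 2) * hs2
      + (μ * (μ * a * s + μ ^ 2 * x ^ 2 + 2 * b * ρ) * s ^ 2) * hxs
  rw [hident, abs_div, abs_neg, _root_.abs_of_nonneg (by positivity : (0:ℝ) ≤ 4 * b ^ 2 * ρ ^ 2 * x ^ 2),
    _root_.abs_of_pos (by positivity : (0:ℝ) < μ * D ^ 2)]
  rw [div_le_div_iff₀ (by positivity) hx2]
  have hDsq : μ ^ 2 * x ^ 4 ≤ D ^ 2 := by
    nlinarith [mul_le_mul hDge hDge (le_of_lt (by positivity : (0:ℝ) < μ * x ^ 2)) (le_of_lt hD0)]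
  rw [div_mul_eq_mul_div, le_div_iff₀ (by positivity : (0:ℝ) < μ ^ 3)]
  nlinarith [mul_le_mul_of_nonneg_left hDsq
    (le_of_lt (by positivity : (0:ℝ) < 4 * b ^ 2 * ρ ^ 2 * μ))]
/-- There is `C > 0` such that `|ν_n^h − (iūn − ω₀)| ≤ C/n²` for all nonzero `n` with
`μ₀²n² ≥ 4bρ̄`, where `ω₀ = bρ̄/μ₀`; consequently `e_n := ν_n^h − iūn + ω₀` is
square-summable over such `n`. -/
theorem hyperbolic_asymptotic_estimate (ρ u b μ : ℝ) (hρ : 0 < ρ) (hu : 0 < u) (hb : 0 < b)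
    (hμ : 0 < μ) :
    (∃ C > 0, ∀ n : ℤ, n ≠ 0 → 4 * b * ρ ≤ μ ^ 2 * (n : ℝ) ^ 2 →
      ‖nuH ρ u b μ n
          - (Complex.I * (u : ℂ) * (n : ℂ) - ((b * ρ / μ : ℝ) : ℂ))‖ ≤ C / (n : ℝ) ^ 2) ∧
    Summable (fun m : {n : ℤ // n ≠ 0 ∧ 4 * b * ρ ≤ μ ^ 2 * (n : ℝ) ^ 2} =>
      ‖nuH ρ u b μ m.1 - Complex.I * (u : ℂ) * (m.1 : ℂ)
        + ((b * ρ / μ : ℝ) : ℂ)‖ ^ 2) := by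
  set C : ℝ := 4 * b ^ 2 * ρ ^ 2 / μ ^ 3 with hCdef
  have hC : 0 < C := by positivity
  have hkey : ∀ n : ℤ, n ≠ 0 → 4 * b * ρ ≤ μ ^ 2 * (n : ℝ) ^ 2 →
      ‖nuH ρ u b μ n
        - (Complex.I * (u : ℂ) * (n : ℂ) - ((b * ρ / μ : ℝ) : ℂ))‖ ≤ C / (n : ℝ) ^ 2 :=
    fun n hn h => key_est ρ u b μ hρ hb hμ n hn h
  refine ⟨⟨C, hC, hkey⟩, ?_⟩
  have hsum : Summable (fun n : ℤ => C ^ 2 * (1 / (n : ℝ) ^ 4)) :=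
    (Real.summable_one_div_int_pow.mpr (by norm_num)).mul_left _
  refine Summable.of_nonneg_of_le (fun m => sq_nonneg _) (fun m => ?_)
    (hsum.subtype {n : ℤ | n ≠ 0 ∧ 4 * b * ρ ≤ μ ^ 2 * (n : ℝ) ^ 2})
  obtain ⟨n, hn, h⟩ := m
  have heq : nuH ρ u b μ n - Complex.I * (u : ℂ) * (n : ℂ) + ((b * ρ / μ : ℝ) : ℂ)
      = nuH ρ u b μ n - (Complex.I * (u : ℂ) * (n : ℂ) - ((b * ρ / μ : ℝ) : ℂ)) := by ring
  have hle := hkey n hn h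
  rw [heq] at *
  have hx2 : (0:ℝ) < (n : ℝ) ^ 2 := by positivity
  calc ‖nuH ρ u b μ n - (Complex.I * (u : ℂ) * (n : ℂ) - ((b * ρ / μ : ℝ) : ℂ))‖ ^ 2
      ≤ (C / (n : ℝ) ^ 2) ^ 2 := by
        apply pow_le_pow_left₀ (norm_nonneg _) hle
    _ = C ^ 2 * (1 / (n : ℝ) ^ 4) := by
        rw [div_pow, ← pow_mul]
        ring
end

section
/- The family of nonnegative reals n ↦ |ν₂ⁿ − ū|² + 1/|ν₁ⁿ − ū|², indexed by the nonzero integers n, is summable. (This is the quadratic closeness of the eigenfunctions Φ_n^h, Φ_n^p of the adjoint operator to the orthogonal family (ρ̄,0)e^{inx}, (0,1)e^{inx}, which underlies their Riesz basis property in (L²(0,2π))².) -/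
open scoped Classical
open Complex

lemma div_sub_u (A u : ℝ) (n : ℤ) (hn : n ≠ 0) :
    ((A : ℂ) + Complex.I * ((u * (n : ℝ) : ℝ) : ℂ)) / (Complex.I * (n : ℂ)) - (u : ℂ)
      = (A : ℂ) / (Complex.I * (n : ℂ)) := by
  have hn' : (n : ℂ) ≠ 0 := Int.cast_ne_zero.2 hn
  have hI : Complex.I * (n : ℂ) ≠ 0 := mul_ne_zero Complex.I_ne_zero hn'
  field_simp
  push_cast
  ring

lemma abs_div_In (A : ℝ) (n : ℤ) :
    ‖(A : ℂ) / (Complex.I * (n : ℂ))‖ = |A| / |(n : ℝ)| := by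
  rw [norm_div, Complex.norm_real, Real.norm_eq_abs, norm_mul, Complex.norm_I, one_mul, Complex.norm_intCast]

lemma key_bound (ρ u b μ : ℝ) (hρ : 0 < ρ) (hb : 0 < b) (hμ : 0 < μ) (n : ℤ) (hn : n ≠ 0)
    (h : 4 * b * ρ ≤ μ ^ 2 * (n : ℝ) ^ 2) :
    ‖nu2 ρ u b μ n - (u : ℂ)‖ ^ 2
      + 1 / ‖nu1 ρ u b μ n - (u : ℂ)‖ ^ 2
      ≤ (4 * b ^ 2 * ρ ^ 2 + 4) / μ ^ 2 / (n : ℝ) ^ 2 := by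
  have hn' : (n : ℝ) ≠ 0 := Int.cast_ne_zero.2 hn
  have hnabs : (0 : ℝ) < |(n : ℝ)| := abs_pos.2 hn'
  set s : ℝ := Real.sqrt (μ ^ 2 * (n : ℝ) ^ 2 - 4 * b * ρ) with hs
  have hs0 : 0 ≤ s := Real.sqrt_nonneg _
  have hs2 : s ^ 2 = μ ^ 2 * (n : ℝ) ^ 2 - 4 * b * ρ := Real.sq_sqrt (by linarith)
  have hn2 : (n : ℝ) ^ 2 = |(n : ℝ)| ^ 2 := (_root_.sq_abs _).symm
  have hsle : s ≤ μ * |(n : ℝ)| := by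
    rw [hs, show μ * |(n : ℝ)| = Real.sqrt ((μ * |(n : ℝ)|) ^ 2) from
      (Real.sqrt_sq (by positivity)).symm]
    apply Real.sqrt_le_sqrt
    nlinarith
  have hnn2 : (0 : ℝ) < (n : ℝ) ^ 2 := by rw [hn2]; exact pow_pos hnabs 2
  have hpos1 : 0 < μ * |(n : ℝ)| := by positivity
  -- the two absolute values
  have h2 : ‖nu2 ρ u b μ n - (u : ℂ)‖ = (μ * |(n : ℝ)| - s) / 2 := by
    rw [nu2, nuH, if_pos h, div_sub_u _ _ _ hn, abs_div_In]
    rw [abs_of_nonpos (by nlinarith)]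
    field_simp
    nlinarith
  have h1 : ‖nu1 ρ u b μ n - (u : ℂ)‖ = (μ * |(n : ℝ)| + s) / 2 := by
    rw [nu1, nuP, if_pos h, div_sub_u _ _ _ hn, abs_div_In]
    rw [abs_of_nonpos (by nlinarith)]
    field_simp
    nlinarith
  rw [h1, h2]
  have ht0 : 0 ≤ μ * |(n : ℝ)| - s := by linarith
  have hprod : (μ * |(n : ℝ)| - s) * (μ * |(n : ℝ)| + s) = 4 * b * ρ := by nlinarith
  have hbound1 : (μ * |(n : ℝ)| - s) * (μ * |(n : ℝ)|) ≤ 4 * b * ρ := by nlinarith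
  have hterm2 : ((μ * |(n : ℝ)| - s) / 2) ^ 2 ≤ 4 * b ^ 2 * ρ ^ 2 / (μ ^ 2 * (n : ℝ) ^ 2) := by
    rw [hn2, div_pow, div_le_div_iff₀ (by norm_num) (by positivity)]
    nlinarith [mul_nonneg ht0 hpos1.le]
  have hterm1 : 1 / ((μ * |(n : ℝ)| + s) / 2) ^ 2 ≤ 4 / (μ ^ 2 * (n : ℝ) ^ 2) := by
    rw [hn2, div_pow, div_le_div_iff₀ (by positivity) (by positivity)]
    nlinarith [mul_nonneg hs0 hpos1.le, sq_nonneg s]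
  calc ((μ * |(n : ℝ)| - s) / 2) ^ 2 + 1 / ((μ * |(n : ℝ)| + s) / 2) ^ 2
      ≤ 4 * b ^ 2 * ρ ^ 2 / (μ ^ 2 * (n : ℝ) ^ 2) + 4 / (μ ^ 2 * (n : ℝ) ^ 2) := by
        linarith
    _ = (4 * b ^ 2 * ρ ^ 2 + 4) / μ ^ 2 / (n : ℝ) ^ 2 := by
        rw [← add_div, div_div]

/-- Quadratic closeness of the eigenfunctions of the adjoint operator to the orthogonal
family `(ρ̄,0)e^{inx}`, `(0,1)e^{inx}`: the family
`n ↦ |ν₂ⁿ − ū|² + 1/|ν₁ⁿ − ū|²` is summable over the nonzero integers. -/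
theorem quadratic_closeness (ρ u b μ : ℝ) (hρ : 0 < ρ) (hu : 0 < u) (hb : 0 < b)
    (hμ : 0 < μ) :
    Summable (fun m : {n : ℤ // n ≠ 0} =>
      ‖nu2 ρ u b μ m.1 - (u : ℂ)‖ ^ 2
        + 1 / ‖nu1 ρ u b μ m.1 - (u : ℂ)‖ ^ 2) := by
  set C : ℝ := (4 * b ^ 2 * ρ ^ 2 + 4) / μ ^ 2 with hC
  have hsum : Summable (fun m : {n : ℤ // n ≠ 0} => C / (m.1 : ℝ) ^ 2) := by
    have h1 : Summable (fun n : ℤ => 1 / (n : ℝ) ^ 2) :=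
      (Real.summable_one_div_int_pow).2 one_lt_two
    have h2 := (h1.subtype {n : ℤ | n ≠ 0}).mul_left C
    refine h2.congr fun m => ?_
    simp [div_eq_mul_inv]
  refine Summable.of_norm_bounded_eventually hsum ?_
  have hfin : {m : {n : ℤ // n ≠ 0} | μ ^ 2 * (m.1 : ℝ) ^ 2 < 4 * b * ρ}.Finite := by
    set N : ℤ := ⌈Real.sqrt (4 * b * ρ) / μ⌉ with hN
    apply Set.Finite.subset ((Set.finite_Icc (-N) N).preimage
      (Subtype.coe_injective.injOn))
    intro m hm
    simp only [Set.mem_setOf_eq] at hm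
    have hnabs : |((m.1 : ℤ) : ℝ)| < Real.sqrt (4 * b * ρ) / μ := by
      rw [lt_div_iff₀ hμ]
      have h1 : (μ * |((m.1 : ℤ) : ℝ)|) ^ 2 < Real.sqrt (4 * b * ρ) ^ 2 := by
        rw [Real.sq_sqrt (by positivity)]
        nlinarith [_root_.sq_abs ((m.1 : ℤ) : ℝ)]
      have h2 : 0 ≤ μ * |((m.1 : ℤ) : ℝ)| := by positivity
      nlinarith [Real.sqrt_nonneg (4 * b * ρ)]
    have : (|m.1| : ℝ) < (N : ℝ) := by
      rw [← Int.cast_abs] at hnabs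
      rw [← Int.cast_abs]
      exact lt_of_lt_of_le hnabs (Int.le_ceil _)
    have habs : |m.1| ≤ N := by exact_mod_cast this.le
    simp only [Set.mem_preimage, Set.mem_Icc]
    constructor
    · linarith [neg_abs_le m.1]
    · linarith [le_abs_self m.1]
  refine Set.Finite.subset hfin ?_
  intro m hm
  simp only [Set.mem_setOf_eq] at hm ⊢
  by_contra hcase
  push_neg at hcase
  apply hm
  have hb' := key_bound ρ u b μ hρ hb hμ m.1 m.2 hcase
  simp only [Set.mem_setOf_eq]
  rw [Real.norm_of_nonneg (by positivity)]
  exact hb'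
end

section
/- (Lack of null controllability in velocity for less regular initial states.) For every T > 0 and every real s with 0 ≤ s < 1, there is no constant C > 0 such that for all nonzero integers n, (1 + n²)^{−s} ≤ C·∫₀ᵀ |ν₂ⁿ(ν₂ⁿ − ū)|²·e^{2Re(ν_n^h)(T−t)} dt. (This expresses that the observability inequality in Ḣ^{−s}_per × L̇² fails on the hyperbolic eigenfunctions Φ_n^h; consequently the linearized barotropic system with one boundary control in velocity is not null controllable at any time T > 0 in Ḣ^s_per(0,2π) × L̇²(0,2π) for 0 ≤ s < 1.) -/
open scoped Classical
open Complex

set_option maxHeartbeats 2000000 in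
/-- Lack of null controllability in velocity for less regular initial states: for any
`T > 0` and `0 ≤ s < 1` there is no constant `C > 0` such that
`(1 + n²)^{−s} ≤ C·∫₀ᵀ |ν₂ⁿ(ν₂ⁿ − ū)|²·e^{2Re(ν_n^h)(T−t)} dt` for all nonzero `n`. -/
theorem lack_of_null_controllability_velocity (ρ u b μ : ℝ) (hρ : 0 < ρ) (hu : 0 < u)
    (hb : 0 < b) (hμ : 0 < μ) (T : ℝ) (hT : 0 < T) (s : ℝ) (hs0 : 0 ≤ s) (hs1 : s < 1) :
    ¬∃ C > 0, ∀ n : ℤ, n ≠ 0 →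
      (1 + (n : ℝ) ^ 2) ^ (-s) ≤
        C * ∫ t in (0 : ℝ)..T,
          ‖nu2 ρ u b μ n * (nu2 ρ u b μ n - (u : ℂ))‖ ^ 2
            * Real.exp (2 * (nuH ρ u b μ n).re * (T - t)) := by
  rintro ⟨C, hC, h⟩
  obtain ⟨q, hqdef⟩ : ∃ q : ℝ, q = 2 * b * ρ / μ := ⟨_, rfl⟩
  have hq0 : 0 < q := by rw [hqdef]; positivity
  obtain ⟨K, hKdef⟩ : ∃ K : ℝ, K = (q ^ 2 + u ^ 2) * q ^ 2 := ⟨_, rfl⟩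
  have hK0 : 0 < K := by rw [hKdef]; positivity
  obtain ⟨R, hRdef⟩ : ∃ R : ℝ, R = C * K * T := ⟨_, rfl⟩
  have hR0 : 0 < R := by rw [hRdef]; positivity
  have hexp : 0 < 2 - 2 * s := by linarith
  obtain ⟨m, hm⟩ := exists_nat_gt
    (max (Real.sqrt (4 * b * ρ) / μ) ((2 * R) ^ ((2 - 2 * s)⁻¹)))
  obtain ⟨N, hNdef⟩ : ∃ N : ℝ, N = (m : ℝ) := ⟨_, rfl⟩
  rw [← hNdef] at hm
  have hN0 : 0 < N := by
    have h1 : (0:ℝ) < (2 * R) ^ ((2 - 2 * s)⁻¹) := Real.rpow_pos_of_pos (by linarith) _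
    exact lt_trans h1 (lt_of_le_of_lt (le_max_right _ _) hm)
  have hmpos : 0 < m := by
    have := hN0; rw [hNdef] at this; exact_mod_cast this
  have hN1 : 1 ≤ N := by rw [hNdef]; exact_mod_cast hmpos
  -- hyperbolic regime
  have hsq : Real.sqrt (4 * b * ρ) < μ * N := by
    have h1 := lt_of_le_of_lt (le_max_left _ _) hm
    calc Real.sqrt (4 * b * ρ) = μ * (Real.sqrt (4*b*ρ)/μ) := by field_simp
    _ < μ * N := by exact mul_lt_mul_of_pos_left h1 hμ
  have hcase : 4 * b * ρ ≤ μ ^ 2 * N ^ 2 := by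
    nlinarith [Real.sq_sqrt (by positivity : (0:ℝ) ≤ 4*b*ρ), Real.sqrt_nonneg (4*b*ρ)]
  -- the integer
  obtain ⟨nz, hnz⟩ : ∃ nz : ℤ, nz = (m : ℤ) := ⟨_, rfl⟩
  have hcast : ((nz : ℤ) : ℝ) = N := by rw [hnz, hNdef]; push_cast; ring
  have hnz0 : nz ≠ 0 := by rw [hnz]; exact_mod_cast hmpos.ne'
  -- the eigenvalue in the hyperbolic regime
  obtain ⟨S, hSdef⟩ : ∃ S : ℝ, S = Real.sqrt (μ ^ 2 * N ^ 2 - 4 * b * ρ) := ⟨_, rfl⟩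
  have hS0 : 0 ≤ S := by rw [hSdef]; exact Real.sqrt_nonneg _
  have hS2 : S ^ 2 = μ ^ 2 * N ^ 2 - 4 * b * ρ := by
    rw [hSdef, Real.sq_sqrt (by linarith)]
  obtain ⟨A, hAdef⟩ : ∃ A : ℝ, A = (-(μ * N ^ 2) + N * S) / 2 := ⟨_, rfl⟩
  have hnuH : nuH ρ u b μ nz = (A : ℂ) + Complex.I * ((u * N : ℝ) : ℂ) := by
    rw [hAdef, hSdef, nuH, hcast, if_pos hcase, abs_of_pos hN0]
  have hSle : S ≤ μ * N := by
    rw [hSdef]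
    have h1 : Real.sqrt (μ ^ 2 * N ^ 2 - 4 * b * ρ) ≤ Real.sqrt (μ ^ 2 * N ^ 2) :=
      Real.sqrt_le_sqrt (by nlinarith)
    have h2 : Real.sqrt (μ ^ 2 * N ^ 2) = μ * N := by
      rw [show μ ^ 2 * N ^ 2 = (μ * N) ^ 2 by ring]
      exact Real.sqrt_sq (by positivity)
    linarith
  have hA0 : A ≤ 0 := by
    rw [hAdef]
    nlinarith
  have hA2 : A ^ 2 ≤ q ^ 2 := by
    have hqmul : μ * q = 2 * b * ρ := by rw [hqdef]; field_simp
    have h1 : (μ * N - S) * (μ * N + S) = 4 * b * ρ := by linear_combination -hS2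
    have h2 : 0 ≤ μ * N - S := by linarith
    have h3 : μ * N - S ≤ 2 * q / N := by
      rw [le_div_iff₀ hN0]
      nlinarith
    have h4 : A = -(N * (μ * N - S)) / 2 := by rw [hAdef]; ring
    rw [h4]
    have h5 : N * (μ * N - S) ≤ 2 * q := by
      have := (le_div_iff₀ hN0).mp h3
      linarith [this]
    nlinarith [mul_nonneg hN0.le h2]
  -- real part
  have hre : (nuH ρ u b μ nz).re = A := by rw [hnuH]; simp
  -- |nuH|^2
  have habsnuH : ‖nuH ρ u b μ nz‖ ^ 2 = A ^ 2 + (u * N) ^ 2 := by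
    rw [hnuH, ← Complex.normSq_eq_norm_sq]
    simp [Complex.normSq_apply]
    ring
  have hNC : ((nz : ℤ) : ℂ) = (N : ℂ) := by rw [← Complex.ofReal_intCast, hcast]
  have hNCne : (N : ℂ) ≠ 0 := by exact_mod_cast hN0.ne'
  have hdiff : nu2 ρ u b μ nz - (u : ℂ) = (A : ℂ) / (Complex.I * (N : ℂ)) := by
    have hIN : Complex.I * (N:ℂ) ≠ 0 := mul_ne_zero Complex.I_ne_zero hNCne
    rw [eq_div_iff hIN, sub_mul, nu2, hNC, div_mul_cancel₀ _ hIN, hnuH]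
    push_cast
    ring
  have habs2 : ‖nu2 ρ u b μ nz * (nu2 ρ u b μ nz - (u:ℂ))‖ ^ 2
      = (A ^ 2 + (u * N) ^ 2) * A ^ 2 / N ^ 4 := by
    rw [norm_mul, hdiff, nu2, hNC, norm_div, norm_div, norm_mul, Complex.norm_I,
      Complex.norm_real, Complex.norm_real, Real.norm_eq_abs, Real.norm_eq_abs, abs_of_pos hN0, mul_pow, div_pow, div_pow,
      habsnuH, _root_.sq_abs]
    ring
  have hcK : ‖nu2 ρ u b μ nz * (nu2 ρ u b μ nz - (u:ℂ))‖ ^ 2 ≤ K / N ^ 2 := by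
    rw [habs2, hKdef, div_le_div_iff₀ (by positivity) (by positivity)]
    have hN2ge : 1 ≤ N ^ 2 := by nlinarith
    have hb1 : A ^ 2 + (u * N) ^ 2 ≤ (q ^ 2 + u ^ 2) * N ^ 2 := by nlinarith [sq_nonneg u]
    have hb2 : (A ^ 2 + (u * N) ^ 2) * A ^ 2 ≤ ((q ^ 2 + u ^ 2) * N ^ 2) * q ^ 2 :=
      mul_le_mul hb1 hA2 (sq_nonneg A) (by positivity)
    nlinarith [mul_le_mul_of_nonneg_right hb2 (sq_nonneg N)]
  set c : ℝ := ‖nu2 ρ u b μ nz * (nu2 ρ u b μ nz - (u:ℂ))‖ ^ 2 with hcdef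
  have hc0 : 0 ≤ c := sq_nonneg _
  -- integral bound
  have hintle : (∫ t in (0:ℝ)..T, c * Real.exp (2 * (nuH ρ u b μ nz).re * (T - t))) ≤ T * c := by
    have hle : ∀ t ∈ Set.Icc (0:ℝ) T, c * Real.exp (2 * (nuH ρ u b μ nz).re * (T - t)) ≤ c := by
      intro t ht
      have h1 : Real.exp (2 * (nuH ρ u b μ nz).re * (T - t)) ≤ 1 := by
        rw [Real.exp_le_one_iff, hre]
        nlinarith [ht.2]
      nlinarith [Real.exp_pos (2 * (nuH ρ u b μ nz).re * (T - t))]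
    calc (∫ t in (0:ℝ)..T, c * Real.exp (2 * (nuH ρ u b μ nz).re * (T - t)))
        ≤ ∫ _t in (0:ℝ)..T, c := by
          apply intervalIntegral.integral_mono_on hT.le _ intervalIntegrable_const hle
          exact (continuous_const.mul (Real.continuous_exp.comp
            (continuous_const.mul (continuous_const.sub continuous_id)))).intervalIntegrable _ _
      _ = T * c := by simp [mul_comm]
  -- conclusion from the hypothesis
  have hmain := h nz hnz0
  rw [hcast] at hmain
  have hstep : (1 + N ^ 2) ^ (-s) ≤ R / N ^ 2 := by
    calc (1 + N ^ 2) ^ (-s) ≤ C * (T * c) := le_trans hmain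
          (mul_le_mul_of_nonneg_left hintle hC.le)
      _ ≤ C * (T * (K / N ^ 2)) := by
          apply mul_le_mul_of_nonneg_left _ hC.le
          exact mul_le_mul_of_nonneg_left hcK hT.le
      _ = R / N ^ 2 := by rw [hRdef]; ring
  -- lower bound on LHS
  have hlow : (1/2) * N ^ ((-2) * s) ≤ (1 + N ^ 2) ^ (-s) := by
    have h1 : (2 * N ^ 2) ^ (-s) ≤ (1 + N ^ 2) ^ (-s) := by
      apply Real.rpow_le_rpow_of_nonpos
      · positivity
      · nlinarith
      · linarith
    have h2 : (2 * N ^ 2 : ℝ) ^ (-s) = (2:ℝ) ^ (-s) * (N ^ 2 : ℝ) ^ (-s) :=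
      Real.mul_rpow (by norm_num) (by positivity)
    have h3 : ((N ^ 2 : ℝ)) ^ (-s) = N ^ ((-2) * s) := by
      rw [← Real.rpow_natCast N 2, ← Real.rpow_mul hN0.le]
      norm_num
    have h4 : (1/2 : ℝ) ≤ (2:ℝ) ^ (-s) := by
      have := Real.rpow_le_rpow_of_exponent_le (by norm_num : (1:ℝ) ≤ 2)
        (by linarith : (-1:ℝ) ≤ -s)
      rwa [Real.rpow_neg_one, ← one_div] at this
    calc (1/2) * N ^ ((-2)*s) ≤ (2:ℝ)^(-s) * N ^ ((-2)*s) :=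
          mul_le_mul_of_nonneg_right h4 (Real.rpow_nonneg hN0.le _)
      _ = (2 * N ^ 2) ^ (-s) := by rw [h2, h3]
      _ ≤ _ := h1
  -- the choice of m gives the contradiction
  have hbig : 2 * R < N ^ (2 - 2 * s) := by
    have h5 : (2 * R) ^ ((2 - 2*s)⁻¹) < N := lt_of_le_of_lt (le_max_right _ _) hm
    have h6 := Real.rpow_lt_rpow (Real.rpow_nonneg (by linarith) _) h5 hexp
    rwa [← Real.rpow_mul (by linarith), inv_mul_cancel₀ hexp.ne', Real.rpow_one] at h6
  have hsplit : N ^ (2 - 2*s) = N ^ (2:ℝ) * N ^ ((-2) * s) := by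
    rw [← Real.rpow_add hN0]; ring_nf
  have hN2 : N ^ (2:ℝ) = N ^ 2 := by
    rw [← Real.rpow_natCast N 2]; norm_num
  have h8 : (1/2) * N ^ ((-2) * s) ≤ R / N ^ 2 := le_trans hlow hstep
  have h9 : N ^ (2:ℝ) * ((1/2) * N ^ ((-2)*s)) ≤ N ^ (2:ℝ) * (R / N ^ 2) :=
    mul_le_mul_of_nonneg_left h8 (Real.rpow_nonneg hN0.le _)
  have h10 : N ^ (2:ℝ) * (R / N ^ 2) = R := by rw [hN2]; field_simp
  have h11 : N ^ (2 - 2*s) ≤ 2 * R := by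
    rw [hsplit]; rw [h10] at h9; linarith
  linarith [hbig, h11]
end

section
/- (Lack of null controllability in density at small time.) Let 0 < T < 2π/ū. Then there is no constant C > 0 such that for every finitely supported family (a_n) of complex numbers indexed by the nonzero integers, Σ_n |a_n|² ≤ C·∫₀ᵀ | Σ_n a_n·ρ̄ν₂ⁿ·e^{ν_n^h(T−t)} |² dt. (This expresses that the observability inequality characterizing null controllability of the linearized barotropic system in (L̇²(0,2π))² with one boundary control in density fails on the hyperbolic family for T < 2π/ū.) -/
open scoped Classical
open Complex

section aux

lemma aux_exp_diff {a b : ℝ} (ha : a ≤ 0) (hb : b ≤ 0) :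
    |Real.exp a - Real.exp b| ≤ |a - b| := by
  wlog hab : a ≤ b generalizing a b
  · rw [abs_sub_comm, abs_sub_comm a b]; exact this hb ha (le_of_not_ge hab)
  have h1 : Real.exp a ≤ Real.exp b := Real.exp_le_exp.2 hab
  rw [_root_.abs_of_nonpos (by linarith), _root_.abs_of_nonpos (by linarith)]
  have h2 : a - b + 1 ≤ Real.exp (a - b) := Real.add_one_le_exp _
  have h3 : Real.exp b ≤ 1 := Real.exp_le_one_iff.2 hb
  have h4 : Real.exp a = Real.exp (a-b) * Real.exp b := by
    rw [← Real.exp_add]; ring_nf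
  nlinarith [Real.exp_pos b, Real.exp_pos (a-b)]

lemma aux_abs_sin {x y : ℝ} (hxy : |x| ≤ y) (hy : y ≤ Real.pi/2) :
    |Real.sin x| ≤ Real.sin y := by
  have h0 : 0 ≤ y := le_trans (abs_nonneg x) hxy
  have hmono := Real.strictMonoOn_sin.monotoneOn
  have key : ∀ z : ℝ, 0 ≤ z → z ≤ y → Real.sin z ≤ Real.sin y := by
    intro z hz hzy
    exact hmono ⟨by linarith [Real.pi_pos], by linarith⟩ ⟨by linarith [Real.pi_pos], hy⟩ hzy
  rcases le_total 0 x with hx | hx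
  · have hxpi : x ≤ Real.pi := by rw [_root_.abs_of_nonneg hx] at hxy; linarith [Real.pi_pos]
    rw [_root_.abs_of_nonneg (Real.sin_nonneg_of_nonneg_of_le_pi hx hxpi)]
    exact key x hx (by rwa [_root_.abs_of_nonneg hx] at hxy)
  · have hxpi : -Real.pi ≤ x := by rw [_root_.abs_of_nonpos hx] at hxy; linarith [Real.pi_pos]
    rw [_root_.abs_of_nonpos (Real.sin_nonpos_of_nonpos_of_neg_pi_le hx hxpi), ← Real.sin_neg]
    exact key (-x) (by linarith) (by rwa [_root_.abs_of_nonpos hx] at hxy)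

lemma aux_one_add_exp (θ : ℝ) :
    ‖(1 + Complex.exp ((θ:ℂ) * Complex.I))‖ = 2 * |Real.cos (θ/2)| := by
  have h : (1 + Complex.exp ((θ:ℂ) * Complex.I))
      = Complex.exp (((θ/2 : ℝ):ℂ) * Complex.I) * (2 * Complex.cos ((θ/2 : ℝ) : ℂ)) := by
    rw [Complex.two_cos, mul_add, ← Complex.exp_add, ← Complex.exp_add]
    push_cast
    rw [show (θ:ℂ)/2 * I + (θ:ℂ)/2 * I = θ * I by ring,
      show (θ:ℂ)/2 * I + -((θ:ℂ)/2) * I = 0 by ring, Complex.exp_zero]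
    ring
  rw [h, norm_mul, Complex.norm_exp_ofReal_mul_I,
    ← Complex.ofReal_cos, one_mul, norm_mul, Complex.norm_real, Complex.norm_two, Real.norm_eq_abs]

lemma sigma_bounds {b ρ μ x s : ℝ} (hb : 0 < b) (hρ : 0 < ρ) (hμ : 0 < μ) (hx : 1 ≤ x)
    (hcond : 4*b*ρ ≤ μ^2*x^2) (hs0 : 0 ≤ s) (hs2 : s^2 = μ^2*x^4 - 4*b*ρ*x^2) :
    (-(μ*x^2) + s)/2 + b*ρ/μ ≤ 0 ∧ -(4*b^2*ρ^2/(μ^3*x^2)) ≤ (-(μ*x^2) + s)/2 + b*ρ/μ := by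
  have hx0 : (0:ℝ) < x := by linarith
  have hpos : 0 < s + μ*x^2 := by nlinarith
  have hid : (-(μ*x^2) + s)/2 + b*ρ/μ = -(4*b^2*ρ^2*x^2/(μ*(s+μ*x^2)^2)) := by
    field_simp
    linear_combination (μ*s + μ^2*x^2 + 2*b*ρ) * hs2
  constructor
  · rw [hid]
    have : 0 ≤ 4*b^2*ρ^2*x^2/(μ*(s+μ*x^2)^2) := by positivity
    linarith
  · rw [hid, neg_le_neg_iff, div_le_div_iff₀ (by positivity) (by positivity)]
    nlinarith [mul_nonneg (show (0:ℝ) ≤ 4*b^2*ρ^2*μ by positivity)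
      (show (0:ℝ) ≤ s^2 + 2*s*(μ*x^2) by nlinarith [sq_nonneg s, mul_nonneg hs0 (mul_nonneg hμ.le (sq_nonneg x))])]

lemma hyp_facts {ρ u b μ : ℝ} (hρ : 0 < ρ) (hu : 0 < u) (hb : 0 < b) (hμ : 0 < μ)
    (n : ℕ) (hn : 1 ≤ n) (hcond : 4*b*ρ ≤ μ^2*(n:ℝ)^2) :
    ∃ σ : ℝ, nuH ρ u b μ (n:ℤ) = (σ:ℂ) + Complex.I*((u*(n:ℝ) : ℝ):ℂ) ∧ σ + b*ρ/μ ≤ 0 ∧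
      -(4*b^2*ρ^2/(μ^3*(n:ℝ)^2)) ≤ σ + b*ρ/μ ∧ |σ| ≤ 2*b*ρ/μ := by
  have hx : (1:ℝ) ≤ (n:ℝ) := by exact_mod_cast hn
  have hx0 : (0:ℝ) < (n:ℝ) := by linarith
  set s : ℝ := (n:ℝ) * Real.sqrt (μ^2*(n:ℝ)^2 - 4*b*ρ) with hs
  have hs0 : 0 ≤ s := mul_nonneg hx0.le (Real.sqrt_nonneg _)
  have hs2 : s^2 = μ^2*(n:ℝ)^4 - 4*b*ρ*(n:ℝ)^2 := by
    rw [hs, mul_pow, Real.sq_sqrt (by linarith)]; ring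
  obtain ⟨h1, h2⟩ := sigma_bounds hb hρ hμ hx hcond hs0 hs2
  refine ⟨(-(μ*(n:ℝ)^2) + s)/2, ?_, h1, h2, ?_⟩
  · rw [nuH]
    rw [if_pos (by push_cast; exact hcond)]
    push_cast
    rw [_root_.abs_of_nonneg hx0.le, hs]
    push_cast
    ring
  · have h3 : 4*b^2*ρ^2/(μ^3*(n:ℝ)^2) ≤ b*ρ/μ := by
      rw [div_le_div_iff₀ (by positivity) (by positivity)]
      nlinarith [mul_pos hb hρ, mul_pos hμ (mul_pos hb hρ)]
    have e : 2*b*ρ/μ = 2*(b*ρ/μ) := by ring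
    rw [abs_le, e]
    constructor <;> linarith

lemma nu2_facts {ρ u b μ : ℝ} (hρ : 0 < ρ) (hu : 0 < u) (hb : 0 < b) (hμ : 0 < μ)
    (n : ℕ) (hn : 1 ≤ n) (hcond : 4*b*ρ ≤ μ^2*(n:ℝ)^2) :
    nu2 ρ u b μ (n:ℤ) ≠ 0 ∧ ‖nu2 ρ u b μ (n:ℤ)‖ ≤ u + 2*b*ρ/μ := by
  have hx : (1:ℝ) ≤ (n:ℝ) := by exact_mod_cast hn
  have hx0 : (0:ℝ) < (n:ℝ) := by linarith
  obtain ⟨σ, hev, h1, h2, h3⟩ := hyp_facts hρ hu hb hμ n hn hcond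
  have hr : 0 < b*ρ/μ := by positivity
  have hσ0 : σ < 0 := by linarith
  have hne : nuH ρ u b μ (n:ℤ) ≠ 0 := by
    rw [hev]
    intro h
    have := congrArg Complex.re h
    simp at this
    linarith
  have hden : (Complex.I * ((n:ℤ):ℂ)) ≠ 0 := by
    simp [Complex.I_ne_zero]
    exact_mod_cast hx0.ne'
  constructor
  · rw [nu2]
    exact div_ne_zero hne hden
  · rw [nu2, norm_div]
    have hd : ‖Complex.I * ((n:ℤ):ℂ)‖ = (n:ℝ) := by
      rw [norm_mul, Complex.norm_I, one_mul]
      push_cast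
      rw [Complex.norm_natCast]
    rw [hd, div_le_iff₀ hx0, hev]
    calc ‖(σ:ℂ) + Complex.I*((u*(n:ℝ) : ℝ):ℂ)‖ ≤ ‖(σ:ℂ)‖ + ‖Complex.I*((u*(n:ℝ) : ℝ):ℂ)‖ := norm_add_le _ _
      _ = |σ| + u*(n:ℝ) := by
          rw [norm_mul, Complex.norm_I, one_mul, Complex.norm_real, Complex.norm_real,
            Real.norm_eq_abs, Real.norm_eq_abs,
            _root_.abs_of_nonneg (by positivity : (0:ℝ) ≤ u*(n:ℝ))]
      _ ≤ 2*b*ρ/μ + u*(n:ℝ) := by linarith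
      _ ≤ (u + 2*b*ρ/μ) * (n:ℝ) := by
          nlinarith [mul_nonneg (by positivity : (0:ℝ) ≤ 2*b*ρ/μ) (by linarith : (0:ℝ) ≤ (n:ℝ) - 1)]

end aux

set_option maxHeartbeats 2000000 in
/-- Lack of null controllability in density at small time `0 < T < 2π/ū`: there is no
constant `C > 0` such that for every finitely supported family `(a_n)` indexed by the
nonzero integers, `Σ|a_n|² ≤ C·∫₀ᵀ |Σ a_n ρ̄ν₂ⁿ e^{ν_n^h(T−t)}|² dt`. -/
theorem lack_of_null_controllability_density_small_time (ρ u b μ : ℝ) (hρ : 0 < ρ)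
    (hu : 0 < u) (hb : 0 < b) (hμ : 0 < μ) (T : ℝ) (hT0 : 0 < T)
    (hT : T < 2 * Real.pi / u) :
    ¬∃ C > 0, ∀ a : ℤ → ℂ, (Function.support a).Finite → a 0 = 0 →
      (∑' n : ℤ, ‖a n‖ ^ 2) ≤
        C * ∫ t in (0 : ℝ)..T,
          ‖∑' n : ℤ, a n * ((ρ : ℂ) * nu2 ρ u b μ n)
            * Complex.exp (nuH ρ u b μ n * ((T : ℂ) - (t : ℂ)))‖ ^ 2 := by
  rintro ⟨C, hC, hobs⟩
  have huT : u * T < 2 * Real.pi := by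
    rw [lt_div_iff₀ hu] at hT; linarith
  have huT0 : 0 < u * T := mul_pos hu hT0
  set q := Real.sin (u*T/4) with hqdef
  have hq0 : 0 < q := Real.sin_pos_of_pos_of_lt_pi (by linarith) (by linarith [Real.pi_pos])
  have hq1 : q < 1 := by
    rw [hqdef, ← Real.sin_pi_div_two]
    exact Real.strictMonoOn_sin ⟨by linarith [Real.pi_pos], by linarith⟩
      ⟨by linarith [Real.pi_pos], le_refl _⟩ (by linarith)
  set M₁ := u + 2*b*ρ/μ with hM₁def
  have hM₁ : 0 < M₁ := by positivity
  set D := C * (4*T) * (ρ*M₁)^2 with hDdef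
  have hD : 0 < D := by positivity
  -- choose K
  have hq2 : q^2 < 1 := by nlinarith
  have hq2' : (0:ℝ) ≤ q^2 := sq_nonneg q
  have hlim : Filter.Tendsto (fun K : ℕ => ((K:ℝ)+1) * (q^2)^K) Filter.atTop (nhds 0) := by
    have h1 : Filter.Tendsto (fun K : ℕ => ((K:ℝ))^1 * (q^2)^K) Filter.atTop (nhds 0) :=
      (summable_pow_mul_geometric_of_norm_lt_one (R := ℝ) (r := q^2) 1
        (by rwa [Real.norm_eq_abs, _root_.abs_of_nonneg hq2'])).tendsto_atTop_zero
    have h2 : Filter.Tendsto (fun K : ℕ => (q^2)^K) Filter.atTop (nhds 0) :=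
      tendsto_pow_atTop_nhds_zero_of_lt_one hq2' hq2
    have := h1.add h2
    rw [add_zero] at this
    convert this using 2 with K
    ring
  obtain ⟨K, hK⟩ : ∃ K : ℕ, ((K:ℝ)+1) * (q^2)^K < 1/D :=
    (hlim.eventually (gt_mem_nhds (by positivity : (0:ℝ) < 1/D))).exists
  -- choose N
  set Ec := 4*b^2*ρ^2*T/μ^3 with hEcdef
  have hEc : 0 < Ec := by positivity
  obtain ⟨N, hNgt⟩ := exists_nat_gt (max 1 (max (Real.sqrt (4*b*ρ)/μ) (Real.sqrt (Ec/q^K))))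
  have hN1 : 1 ≤ N := by
    have := lt_of_le_of_lt (le_max_left 1 _) hNgt
    exact_mod_cast this.le
  have hNR : (1:ℝ) ≤ (N:ℝ) := by exact_mod_cast hN1
  have hcond : ∀ m : ℕ, 4*b*ρ ≤ μ^2*((N+m : ℕ):ℝ)^2 := by
    intro m
    have h1 : Real.sqrt (4*b*ρ)/μ < (N:ℝ) := lt_of_le_of_lt ((le_max_left _ _).trans (le_max_right _ _)) hNgt
    have h2 : (N:ℝ) ≤ ((N+m:ℕ):ℝ) := by push_cast; linarith [Nat.cast_nonneg (α := ℝ) m]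
    have h3 : Real.sqrt (4*b*ρ) < μ*((N+m:ℕ):ℝ) := by
      rw [div_lt_iff₀ hμ] at h1; nlinarith
    have h4 := Real.sq_sqrt (by positivity : (0:ℝ) ≤ 4*b*ρ)
    nlinarith [Real.sqrt_nonneg (4*b*ρ)]
  have hNm1 : ∀ m : ℕ, 1 ≤ N + m := fun m => le_add_right hN1 -- maybe
  have herr : ∀ m : ℕ, 4*b^2*ρ^2/(μ^3*((N+m:ℕ):ℝ)^2) * T ≤ q^K := by
    intro m
    have h1 : Real.sqrt (Ec/q^K) < (N:ℝ) := lt_of_le_of_lt ((le_max_right _ _).trans (le_max_right _ _)) hNgt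
    have h2 : (N:ℝ) ≤ ((N+m:ℕ):ℝ) := by push_cast; linarith [Nat.cast_nonneg (α := ℝ) m]
    have hqK : (0:ℝ) < q^K := pow_pos hq0 K
    have h4 := Real.sq_sqrt (by positivity : (0:ℝ) ≤ Ec/q^K)
    have h5 : Ec/q^K < ((N+m:ℕ):ℝ)^2 := by nlinarith [Real.sqrt_nonneg (Ec/q^K)]
    have h6 : Ec < q^K * ((N+m:ℕ):ℝ)^2 := by
      rw [div_lt_iff₀ hqK] at h5; nlinarith
    rw [hEcdef, div_lt_iff₀ (by positivity : (0:ℝ) < μ^3)] at h6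
    have h7 : (0:ℝ) < ((N+m:ℕ):ℝ)^2 := by positivity
    rw [div_mul_eq_mul_div, div_le_iff₀ (by positivity)]
    nlinarith
  -- eigen data
  have hfacts : ∀ m : ℕ, ∃ σ : ℝ,
      nuH ρ u b μ ((N+m : ℕ):ℤ) = (σ:ℂ) + Complex.I*((u*((N+m:ℕ):ℝ) : ℝ):ℂ) ∧
      σ + b*ρ/μ ≤ 0 ∧ -(4*b^2*ρ^2/(μ^3*((N+m:ℕ):ℝ)^2)) ≤ σ + b*ρ/μ ∧ |σ| ≤ 2*b*ρ/μ :=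
    fun m => hyp_facts hρ hu hb hμ (N+m) (hNm1 m) (hcond m)
  choose σf hσev hσ1 hσ2 hσ3 using hfacts
  have hnu2 : ∀ m : ℕ, nu2 ρ u b μ ((N+m:ℕ):ℤ) ≠ 0 ∧ ‖nu2 ρ u b μ ((N+m:ℕ):ℤ)‖ ≤ M₁ :=
    fun m => nu2_facts hρ hu hb hμ (N+m) (hNm1 m) (hcond m)
  -- coefficients
  set φ := Real.pi - u*T/2 with hφdef
  set ω : ℂ := Complex.exp ((φ:ℂ) * Complex.I) with hωdef
  set c : ℕ → ℝ := fun m => (K.choose m : ℝ)/2^K with hcdef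
  have hc0 : ∀ m, 0 ≤ c m := fun m => by positivity
  have hcsum : ∑ m ∈ Finset.range (K+1), c m = 1 := by
    rw [hcdef, ← Finset.sum_div]
    rw [show ∑ m ∈ Finset.range (K+1), (K.choose m : ℝ) = ((∑ m ∈ Finset.range (K+1), K.choose m : ℕ) : ℝ) by push_cast; ring]
    rw [Nat.sum_range_choose]
    push_cast
    field_simp
  set d : ℕ → ℂ := fun m => ((c m : ℝ):ℂ) * ω^m / ((ρ:ℂ) * nu2 ρ u b μ ((N+m:ℕ):ℤ)) with hddef
  set a : ℤ → ℂ := fun j => if (N:ℤ) ≤ j ∧ j ≤ (N:ℤ) + (K:ℤ) then d (j - (N:ℤ)).toNat else 0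
    with hadef
  have ha_eval : ∀ m : ℕ, m ≤ K → a ((N:ℤ) + (m:ℤ)) = d m := by
    intro m hm
    rw [hadef]
    simp only []
    rw [if_pos ⟨by omega, by omega⟩]
    congr 1
    omega
  have ha_zero : ∀ j : ℤ, j ∉ Finset.Icc (N:ℤ) ((N:ℤ)+(K:ℤ)) → a j = 0 := by
    intro j hj
    rw [Finset.mem_Icc] at hj
    rw [hadef]
    simp only []
    rw [if_neg (by omega)]
  have hfin : (Function.support a).Finite := by
    apply Set.Finite.subset (Finset.Icc (N:ℤ) ((N:ℤ)+(K:ℤ))).finite_toSet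
    intro j hj
    by_contra hmem
    exact hj (ha_zero j (by simpa using hmem))
  have ha0 : a 0 = 0 := ha_zero 0 (by simp [Finset.mem_Icc]; omega)
  have hIcc : Finset.Icc (N:ℤ) ((N:ℤ)+(K:ℤ))
      = (Finset.range (K+1)).map ⟨fun m : ℕ => (N:ℤ) + m,
        show Function.Injective (fun m : ℕ => (N:ℤ) + m) from fun x y h => by simpa using h⟩ := by
    ext j
    simp only [Finset.mem_Icc, Finset.mem_map, Finset.mem_range, Function.Embedding.coeFn_mk]
    constructor
    · intro h
      exact ⟨(j - (N:ℤ)).toNat, by omega, by omega⟩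
    · rintro ⟨m, hm, rfl⟩
      omega
  -- lower bound for the l² norm
  have hρM : (0:ℝ) < ρ * M₁ := by positivity
  have hdlow : ∀ m : ℕ, m ≤ K → (c m/(ρ*M₁))^2 ≤ ‖a ((N:ℤ)+(m:ℤ))‖^2 := by
    intro m hm
    rw [ha_eval m hm, hddef]
    simp only []
    rw [norm_div, norm_mul, norm_pow, hωdef,
      Complex.norm_exp_ofReal_mul_I, one_pow, mul_one, Complex.norm_real (c m),
      Real.norm_eq_abs, _root_.abs_of_nonneg (hc0 m), norm_mul]
    have hnu := hnu2 m
    have hnupos : 0 < ‖nu2 ρ u b μ ((N+m:ℕ):ℤ)‖ := norm_pos_iff.2 hnu.1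
    have hρn : ‖(ρ:ℂ)‖ = ρ := by
      rw [Complex.norm_real, Real.norm_eq_abs, _root_.abs_of_nonneg hρ.le]
    rw [hρn]
    have hle : c m / (ρ*M₁) ≤ c m / (ρ * ‖nu2 ρ u b μ ((N+m:ℕ):ℤ)‖) := by
      apply div_le_div_of_nonneg_left (hc0 m) (by positivity)
      exact mul_le_mul_of_nonneg_left hnu.2 hρ.le
    have h0 : 0 ≤ c m / (ρ*M₁) := by positivity
    nlinarith [div_nonneg (hc0 m) (by positivity : (0:ℝ) ≤ ρ * ‖nu2 ρ u b μ ((N+m:ℕ):ℤ)‖)]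
  have hLHS : 1/(((K:ℝ)+1)*(ρ*M₁)^2) ≤ ∑' j : ℤ, ‖a j‖^2 := by
    have htsum : ∑' j : ℤ, ‖a j‖^2 = ∑ j ∈ Finset.Icc (N:ℤ) ((N:ℤ)+(K:ℤ)), ‖a j‖^2 :=
      tsum_eq_sum (fun j hj => by rw [ha_zero j hj]; simp)
    rw [htsum, hIcc, Finset.sum_map]
    simp only [Function.Embedding.coeFn_mk]
    set S := ∑ m ∈ Finset.range (K+1), ‖a ((N:ℤ)+(m:ℤ))‖^2 with hSdef
    have hS1 : ∑ m ∈ Finset.range (K+1), (c m/(ρ*M₁))^2 ≤ S := by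
      apply Finset.sum_le_sum
      intro m hm
      exact hdlow m (Nat.lt_succ_iff.1 (Finset.mem_range.1 hm))
    have hCS := sq_sum_le_card_mul_sum_sq (s := Finset.range (K+1))
      (f := fun m => c m/(ρ*M₁))
    have hsum : ∑ m ∈ Finset.range (K+1), c m/(ρ*M₁) = 1/(ρ*M₁) := by
      rw [← Finset.sum_div, hcsum]
    rw [hsum, Finset.card_range] at hCS
    have hcard : ((K+1 : ℕ):ℝ) = (K:ℝ)+1 := by push_cast; ring
    rw [hcard] at hCS
    have hS0 : 0 ≤ S := Finset.sum_nonneg (fun m _ => by positivity)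
    have h : 1/(ρ*M₁)^2 ≤ ((K:ℝ)+1)*S := by
      have := le_trans hCS (mul_le_mul_of_nonneg_left hS1 (by positivity : (0:ℝ) ≤ (K:ℝ)+1))
      calc 1/(ρ*M₁)^2 = (1/(ρ*M₁))^2 := by rw [div_pow, one_pow]
        _ ≤ ((K:ℝ)+1)*S := this
    have h' : 1 ≤ ((K:ℝ)+1)*S*(ρ*M₁)^2 := (div_le_iff₀ (by positivity)).1 h
    rw [div_le_iff₀ (by positivity)]
    nlinarith [h']
  -- rewrite the inner tsum as a finite sum
  have hidx : ∀ m : ℕ, ((N:ℤ)+(m:ℤ)) = ((N+m:ℕ):ℤ) := by intro m; push_cast; ring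
  have hFsum : ∀ t : ℝ,
      (∑' j : ℤ, a j * ((ρ:ℂ) * nu2 ρ u b μ j) * Complex.exp (nuH ρ u b μ j * ((T:ℂ)-(t:ℂ))))
      = ∑ m ∈ Finset.range (K+1), ((c m : ℝ):ℂ) * ω^m
          * Complex.exp (nuH ρ u b μ ((N+m:ℕ):ℤ) * ((T:ℂ)-(t:ℂ))) := by
    intro t
    rw [tsum_eq_sum (s := Finset.Icc (N:ℤ) ((N:ℤ)+(K:ℤ)))
      (fun j hj => by rw [ha_zero j hj]; simp)]
    rw [hIcc, Finset.sum_map]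
    apply Finset.sum_congr rfl
    intro m hm
    have hm' : m ≤ K := Nat.lt_succ_iff.1 (Finset.mem_range.1 hm)
    simp only [Function.Embedding.coeFn_mk]
    rw [ha_eval m hm', hidx m, hddef]
    simp only []
    have hne : (ρ:ℂ) * nu2 ρ u b μ ((N+m:ℕ):ℤ) ≠ 0 :=
      mul_ne_zero (by exact_mod_cast hρ.ne') (hnu2 m).1
    rw [div_mul_cancel₀ _ hne]
  -- pointwise bound
  set r := b*ρ/μ with hrdef
  have hr0 : 0 < r := by rw [hrdef]; positivity
  have hbound : ∀ t ∈ Set.Icc (0:ℝ) T,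
      ‖∑ m ∈ Finset.range (K+1), ((c m : ℝ):ℂ) * ω^m
          * Complex.exp (nuH ρ u b μ ((N+m:ℕ):ℤ) * ((T:ℂ)-(t:ℂ)))‖ ≤ 2*q^K := by
    intro t ht
    set τ := T - t with hτdef
    have hτ0 : 0 ≤ τ := by rw [hτdef]; linarith [ht.2]
    have hτT : τ ≤ T := by rw [hτdef]; linarith [ht.1]
    have hTc : (T:ℂ) - (t:ℂ) = ((τ:ℝ):ℂ) := by rw [hτdef]; push_cast; ring
    have hexp : ∀ m : ℕ, Complex.exp (nuH ρ u b μ ((N+m:ℕ):ℤ) * ((T:ℂ)-(t:ℂ)))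
        = ((Real.exp (σf m * τ) : ℝ):ℂ)
          * Complex.exp (((u*((N+m:ℕ):ℝ)*τ : ℝ):ℂ) * Complex.I) := by
      intro m
      rw [hTc, hσev m]
      rw [show ((σf m:ℂ) + Complex.I*((u*((N+m:ℕ):ℝ) : ℝ):ℂ)) * ((τ:ℝ):ℂ)
          = ((σf m * τ : ℝ):ℂ) + ((u*((N+m:ℕ):ℝ)*τ : ℝ):ℂ) * Complex.I by push_cast; ring]
      rw [Complex.exp_add, Complex.ofReal_exp]
    have hsplit : ∀ m ∈ Finset.range (K+1),
        ((c m : ℝ):ℂ) * ω^m * Complex.exp (nuH ρ u b μ ((N+m:ℕ):ℤ) * ((T:ℂ)-(t:ℂ)))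
        = ((c m : ℝ):ℂ) * ω^m * ((Real.exp (σf m * τ) - Real.exp (-(r*τ)) : ℝ):ℂ)
            * Complex.exp (((u*((N+m:ℕ):ℝ)*τ : ℝ):ℂ) * Complex.I)
          + ((Real.exp (-(r*τ)) : ℝ):ℂ) * (((c m : ℝ):ℂ) * ω^m
            * Complex.exp (((u*((N+m:ℕ):ℝ)*τ : ℝ):ℂ) * Complex.I)) := by
      intro m _
      rw [hexp m]
      push_cast
      ring
    rw [Finset.sum_congr rfl hsplit, Finset.sum_add_distrib]
    have hEbound : ‖∑ m ∈ Finset.range (K+1),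
        ((c m : ℝ):ℂ) * ω^m * ((Real.exp (σf m * τ) - Real.exp (-(r*τ)) : ℝ):ℂ)
          * Complex.exp (((u*((N+m:ℕ):ℝ)*τ : ℝ):ℂ) * Complex.I)‖ ≤ q^K := by
      apply le_trans (norm_sum_le _ _)
      have hterm : ∀ m ∈ Finset.range (K+1),
          ‖((c m : ℝ):ℂ) * ω^m * ((Real.exp (σf m * τ) - Real.exp (-(r*τ)) : ℝ):ℂ)
            * Complex.exp (((u*((N+m:ℕ):ℝ)*τ : ℝ):ℂ) * Complex.I)‖ ≤ c m * q^K := by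
        intro m _
        rw [norm_mul, norm_mul, norm_mul, norm_pow, hωdef,
          Complex.norm_exp_ofReal_mul_I, Complex.norm_exp_ofReal_mul_I, one_pow, mul_one, mul_one,
          Complex.norm_real (c m), Real.norm_eq_abs (c m), _root_.abs_of_nonneg (hc0 m),
          Complex.norm_real, Real.norm_eq_abs]
        apply mul_le_mul_of_nonneg_left _ (hc0 m)
        -- |e^{στ} - e^{-rτ}| ≤ q^K
        have hσneg : σf m * τ ≤ 0 :=
          mul_nonpos_of_nonpos_of_nonneg (by linarith [hσ1 m]) hτ0
        have hrneg : -(r*τ) ≤ 0 := by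
          have : 0 ≤ r*τ := mul_nonneg hr0.le hτ0
          linarith
        apply le_trans (aux_exp_diff hσneg hrneg)
        have e1 : σf m * τ - -(r*τ) = (σf m + r) * τ := by ring
        rw [e1, abs_mul, _root_.abs_of_nonneg hτ0]
        have habs : |σf m + r| ≤ 4*b^2*ρ^2/(μ^3*((N+m:ℕ):ℝ)^2) := by
          have hpos : (0:ℝ) ≤ 4*b^2*ρ^2/(μ^3*((N+m:ℕ):ℝ)^2) := by positivity
          rw [abs_le]
          exact ⟨hσ2 m, by linarith [hσ1 m]⟩
        calc |σf m + r| * τ ≤ (4*b^2*ρ^2/(μ^3*((N+m:ℕ):ℝ)^2)) * T := by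
              apply mul_le_mul habs hτT hτ0 (by positivity)
          _ ≤ q^K := herr m
      apply le_trans (Finset.sum_le_sum hterm)
      rw [← Finset.sum_mul, hcsum, one_mul]
    have hMbound : ‖∑ m ∈ Finset.range (K+1),
        ((Real.exp (-(r*τ)) : ℝ):ℂ) * (((c m : ℝ):ℂ) * ω^m
          * Complex.exp (((u*((N+m:ℕ):ℝ)*τ : ℝ):ℂ) * Complex.I))‖ ≤ q^K := by
      set z : ℂ := Complex.exp (((φ + u*τ : ℝ):ℂ) * Complex.I) with hzdef
      have hterm : ∀ m ∈ Finset.range (K+1),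
          ((Real.exp (-(r*τ)) : ℝ):ℂ) * (((c m : ℝ):ℂ) * ω^m
            * Complex.exp (((u*((N+m:ℕ):ℝ)*τ : ℝ):ℂ) * Complex.I))
          = (((Real.exp (-(r*τ)) : ℝ):ℂ) * Complex.exp (((u*(N:ℝ)*τ : ℝ):ℂ) * Complex.I) / 2^K)
            * ((K.choose m : ℂ) * z^m) := by
        intro m _
        have hz : ω^m * Complex.exp (((u*(m:ℝ)*τ : ℝ):ℂ) * Complex.I) = z^m := by
          rw [hzdef, hωdef]
          rw [show ((u*(m:ℝ)*τ : ℝ):ℂ) * Complex.I = (m:ℕ) * (((u*τ:ℝ):ℂ) * Complex.I) by push_cast; ring]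
          rw [Complex.exp_nat_mul, ← mul_pow, ← Complex.exp_add]
          congr 2
          push_cast
          ring
        have hsplitexp : Complex.exp (((u*((N+m:ℕ):ℝ)*τ : ℝ):ℂ) * Complex.I)
            = Complex.exp (((u*(N:ℝ)*τ : ℝ):ℂ) * Complex.I)
              * Complex.exp (((u*(m:ℝ)*τ : ℝ):ℂ) * Complex.I) := by
          rw [← Complex.exp_add]
          congr 1
          push_cast
          ring
        rw [hsplitexp, hcdef]
        simp only []
        rw [← hz]
        push_cast
        ring
      rw [Finset.sum_congr rfl hterm, ← Finset.mul_sum]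
      have hbinom : ∑ m ∈ Finset.range (K+1), (K.choose m : ℂ) * z^m = (1+z)^K := by
        rw [add_comm 1 z, add_pow]
        apply Finset.sum_congr rfl
        intro m _
        rw [one_pow]
        ring
      rw [hbinom, norm_mul, norm_div, norm_mul]
      have h1 : ‖((Real.exp (-(r*τ)) : ℝ):ℂ)‖ ≤ 1 := by
        rw [Complex.norm_real, Real.norm_eq_abs,
          _root_.abs_of_nonneg (Real.exp_nonneg _)]
        apply Real.exp_le_one_iff.2
        have : 0 ≤ r*τ := mul_nonneg hr0.le hτ0
        linarith
      have h2 : ‖Complex.exp (((u*(N:ℝ)*τ : ℝ):ℂ) * Complex.I)‖ = 1 := by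
        rw [Complex.norm_exp_ofReal_mul_I]
      have h3 : ‖(1+z)^K‖ ≤ (2*q)^K := by
        rw [norm_pow]
        apply pow_le_pow_left₀ (norm_nonneg _) _ K
        rw [hzdef, aux_one_add_exp]
        have hhalf : (φ + u*τ)/2 = Real.pi/2 + u*(2*τ-T)/4 := by rw [hφdef]; ring
        rw [hhalf]
        have hcosv : Real.cos (Real.pi/2 + u*(2*τ-T)/4) = -Real.sin (u*(2*τ-T)/4) := by
          rw [Real.cos_add, Real.cos_pi_div_two, Real.sin_pi_div_two]
          ring
        rw [hcosv, abs_neg]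
        have : |Real.sin (u*(2*τ-T)/4)| ≤ q := by
          rw [hqdef]
          apply aux_abs_sin
          · rw [abs_le]
            constructor <;> nlinarith
          · linarith [Real.pi_pos]
        linarith
      have h4 : ‖(2:ℂ)^K‖ = 2^K := by
        rw [norm_pow]
        norm_num
      rw [h2, mul_one, h4]
      have h5 : ‖((Real.exp (-(r*τ)) : ℝ):ℂ)‖/(2:ℝ)^K ≤ 1/2^K := by gcongr
      calc ‖((Real.exp (-(r*τ)) : ℝ):ℂ)‖ / 2^K * ‖(1+z)^K‖
          ≤ 1/2^K * (2*q)^K :=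
            mul_le_mul h5 h3 (norm_nonneg _) (by positivity)
        _ = q^K := by rw [mul_pow]; field_simp
    apply le_trans (norm_add_le _ _)
    linarith [hEbound, hMbound]
  -- integral bound
  have hcont : Continuous (fun t : ℝ => ‖∑ m ∈ Finset.range (K+1), ((c m : ℝ):ℂ) * ω^m
      * Complex.exp (nuH ρ u b μ ((N+m:ℕ):ℤ) * ((T:ℂ)-(t:ℂ)))‖^2) := by
    apply Continuous.pow
    apply Continuous.norm
    apply continuous_finset_sum
    intro m _
    apply Continuous.mul continuous_const
    exact Complex.continuous_exp.comp
      (continuous_const.mul (continuous_const.sub Complex.continuous_ofReal))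
  have hInt : (∫ t in (0:ℝ)..T,
      ‖∑' j : ℤ, a j * ((ρ:ℂ) * nu2 ρ u b μ j) * Complex.exp (nuH ρ u b μ j * ((T:ℂ)-(t:ℂ)))‖^2)
      ≤ T * (2*q^K)^2 := by
    have heq : (∫ t in (0:ℝ)..T,
        ‖∑' j : ℤ, a j * ((ρ:ℂ) * nu2 ρ u b μ j) * Complex.exp (nuH ρ u b μ j * ((T:ℂ)-(t:ℂ)))‖^2)
        = ∫ t in (0:ℝ)..T, ‖∑ m ∈ Finset.range (K+1), ((c m : ℝ):ℂ) * ω^m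
            * Complex.exp (nuH ρ u b μ ((N+m:ℕ):ℤ) * ((T:ℂ)-(t:ℂ)))‖^2 := by
      apply intervalIntegral.integral_congr
      intro x _
      exact congrArg (fun z : ℂ => ‖z‖^2) (hFsum x)
    rw [heq]
    have hmono := intervalIntegral.integral_mono_on (a := (0:ℝ)) (b := T) hT0.le
      (hcont.intervalIntegrable 0 T) (intervalIntegrable_const (μ := MeasureTheory.volume) (c := (2*q^K)^2))
      (fun x hx => by
        have := hbound x hx
        calc ‖∑ m ∈ Finset.range (K+1), ((c m : ℝ):ℂ) * ω^m
            * Complex.exp (nuH ρ u b μ ((N+m:ℕ):ℤ) * ((T:ℂ)-(x:ℂ)))‖^2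
            ≤ (2*q^K)^2 := by
              apply pow_le_pow_left₀ (norm_nonneg _) this)
    apply le_trans hmono
    rw [intervalIntegral.integral_const, smul_eq_mul, sub_zero]
  -- conclusion
  have hfinal := hobs a hfin ha0
  have hmul : C * (∫ t in (0:ℝ)..T,
      ‖∑' j : ℤ, a j * ((ρ:ℂ) * nu2 ρ u b μ j) * Complex.exp (nuH ρ u b μ j * ((T:ℂ)-(t:ℂ)))‖^2)
      ≤ C * (T * (2*q^K)^2) := mul_le_mul_of_nonneg_left hInt hC.le
  have hchain : 1/(((K:ℝ)+1)*(ρ*M₁)^2) ≤ C*(T*(2*q^K)^2) :=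
    le_trans hLHS (le_trans hfinal hmul)
  have hK' : (((K:ℝ)+1) * (q^2)^K) * D < 1 := (lt_div_iff₀ hD).1 hK
  have hpos2 : (0:ℝ) < ((K:ℝ)+1)*(ρ*M₁)^2 := by positivity
  rw [div_le_iff₀ hpos2] at hchain
  have hring : C*(T*(2*q^K)^2) * (((K:ℝ)+1)*(ρ*M₁)^2) = (((K:ℝ)+1) * (q^2)^K) * D := by
    rw [hDdef]
    have e2 : (q^K)^2 = (q^2)^K := by rw [← pow_mul, ← pow_mul, mul_comm]
    rw [← e2]
    ring
  rw [hring] at hchain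
  linarith
end

section
/- (Transport approximation of the hyperbolic modes.) For every T > 0 there exists a constant C > 0 such that for every nonzero integer n with μ₀²n² ≥ 4bρ̄, ∫₀ᵀ | exp(ν_n^h·(T−t)) − exp((iūn − ω₀)·(T−t)) |² dt ≤ C/n². (This estimate shows that the hyperbolic solution modes are approximated by the corresponding pure transport modes, and is the key step in the proof of lack of null controllability at small time.) -/
open scoped Classical
open Complex

/-- `|e^x - e^y| ≤ |x - y|` for nonpositive `x, y`. -/
lemma aux_exp_lipschitz (x y : ℝ) (hx : x ≤ 0) (hy : y ≤ 0) :
    |Real.exp x - Real.exp y| ≤ |x - y| := by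
  wlog h : y ≤ x generalizing x y
  · rw [abs_sub_comm, abs_sub_comm x y]
    exact this y x hy hx (le_of_not_ge h)
  rw [_root_.abs_of_nonneg (sub_nonneg.2 (Real.exp_le_exp.2 h)), _root_.abs_of_nonneg (sub_nonneg.2 h)]
  have h1 : y - x + 1 ≤ Real.exp (y - x) := Real.add_one_le_exp _
  have h2 : Real.exp y = Real.exp x * Real.exp (y - x) := by
    rw [← Real.exp_add]; ring_nf
  have h3 : Real.exp x ≤ 1 := Real.exp_le_one_iff.2 hx
  nlinarith [Real.exp_pos x]

/-- The key estimate on the real part of the hyperbolic eigenvalue. -/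
lemma aux_real_part (ρ b μ : ℝ) (hρ : 0 < ρ) (hb : 0 < b) (hμ : 0 < μ)
    (m r : ℝ) (hm1 : 1 ≤ m) (hr0 : 0 ≤ r)
    (hr2 : r ^ 2 = μ ^ 2 * m ^ 2 - 4 * b * ρ * m)
    (hμ2m : 4 * b * ρ ≤ μ ^ 2 * m) :
    -(4 * b ^ 2 * ρ ^ 2 / (μ ^ 3 * m)) ≤ (-(μ * m) + r) / 2 + b * ρ / μ ∧
      (-(μ * m) + r) / 2 + b * ρ / μ ≤ 0 := by
  have hmpos : (0:ℝ) < m := lt_of_lt_of_le one_pos hm1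
  have hY : 0 < μ ^ 2 * m - 2 * b * ρ := by nlinarith [mul_pos hb hρ]
  have hr2' : μ ^ 2 * r ^ 2 = μ ^ 4 * m ^ 2 - 4 * b * ρ * μ ^ 2 * m := by
    linear_combination μ ^ 2 * hr2
  have hru : μ * r ≤ μ ^ 2 * m - 2 * b * ρ := by
    nlinarith [sq_nonneg (μ * r - (μ ^ 2 * m - 2 * b * ρ)), hr2', hY, mul_pos hb hρ]
  constructor
  · have hQ : 0 < μ ^ 2 * m + μ * r := by positivity
    have key' : (2 * b * ρ * μ ^ 2 * m + 8 * b ^ 2 * ρ ^ 2 - μ ^ 4 * m ^ 2 + μ ^ 3 * m * r)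
        * (μ ^ 2 * m + μ * r)
        = 2 * b * ρ * μ * (r * (μ ^ 2 * m + 4 * b * ρ - μ * r)) := by
      linear_combination (2 * b * ρ * μ ^ 2 + μ ^ 4 * m) * hr2
    have hrfac : 0 ≤ r * (μ ^ 2 * m + 4 * b * ρ - μ * r) := by
      apply mul_nonneg hr0; nlinarith [hru]
    have key : μ ^ 4 * m ^ 2 - μ ^ 3 * m * r ≤ 2 * b * ρ * μ ^ 2 * m + 8 * b ^ 2 * ρ ^ 2 := by
      nlinarith [key', hQ, mul_nonneg (mul_nonneg (mul_nonneg (by norm_num : (0:ℝ) ≤ 2) hb.le) hρ.le) (mul_nonneg hμ.le hrfac)]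
    rw [neg_le, ← sub_nonneg]
    have h4 : 4 * b ^ 2 * ρ ^ 2 / (μ ^ 3 * m) - -((-(μ * m) + r) / 2 + b * ρ / μ)
        = (2 * b * ρ * μ ^ 2 * m + 8 * b ^ 2 * ρ ^ 2 - μ ^ 4 * m ^ 2 + μ ^ 3 * m * r)
          / (2 * μ ^ 3 * m) := by
      field_simp
      ring
    rw [h4]
    exact div_nonneg (by linarith) (by positivity)
  · rw [← neg_nonneg]
    have h5 : -((-(μ * m) + r) / 2 + b * ρ / μ) = (μ ^ 2 * m - μ * r - 2 * b * ρ) / (2 * μ) := by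
      field_simp; ring
    rw [h5]
    exact div_nonneg (by linarith) (by positivity)

/-- Transport approximation of the hyperbolic modes: for each `T > 0` there is `C > 0`
such that for every nonzero `n` with `μ₀²n² ≥ 4bρ̄`,
`∫₀ᵀ |e^{ν_n^h(T−t)} − e^{(iūn − ω₀)(T−t)}|² dt ≤ C/n²`, where `ω₀ = bρ̄/μ₀`. -/
theorem transport_approximation (ρ u b μ : ℝ) (hρ : 0 < ρ) (hu : 0 < u) (hb : 0 < b)
    (hμ : 0 < μ) (T : ℝ) (hT : 0 < T) :
    ∃ C > 0, ∀ n : ℤ, n ≠ 0 → 4 * b * ρ ≤ μ ^ 2 * (n : ℝ) ^ 2 →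
      (∫ t in (0 : ℝ)..T,
        ‖Complex.exp (nuH ρ u b μ n * ((T : ℂ) - (t : ℂ)))
          - Complex.exp ((Complex.I * (u : ℂ) * (n : ℂ) - ((b * ρ / μ : ℝ) : ℂ))
              * ((T : ℂ) - (t : ℂ)))‖ ^ 2) ≤ C / (n : ℝ) ^ 2 := by
  refine ⟨(4 * b ^ 2 * ρ ^ 2 * T / μ ^ 3) ^ 2 * T, by positivity, ?_⟩
  intro n hn hcond
  set m : ℝ := (n : ℝ) ^ 2 with hm_def
  have hm1 : 1 ≤ m := by
    have : (1 : ℝ) ≤ |(n : ℝ)| := by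
      rw [← Int.cast_abs]
      exact_mod_cast Int.one_le_abs hn
    nlinarith [_root_.sq_abs ((n : ℝ))]
  have hmpos : (0 : ℝ) < m := lt_of_lt_of_le one_pos hm1
  set r : ℝ := |(n : ℝ)| * Real.sqrt (μ ^ 2 * (n : ℝ) ^ 2 - 4 * b * ρ) with hr_def
  have hr0 : 0 ≤ r := mul_nonneg (abs_nonneg _) (Real.sqrt_nonneg _)
  have hr2 : r ^ 2 = μ ^ 2 * m ^ 2 - 4 * b * ρ * m := by
    rw [hr_def, mul_pow, _root_.sq_abs, Real.sq_sqrt (by rw [← hm_def]; linarith : (0:ℝ) ≤ μ ^ 2 * (n : ℝ) ^ 2 - 4 * b * ρ)]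
    rw [hm_def]; ring
  set a : ℝ := (-(μ * (n : ℝ) ^ 2) + r) / 2 with ha_def
  set ω : ℝ := b * ρ / μ with hω_def
  have hmain := aux_real_part ρ b μ hρ hb hμ m r hm1 hr0 hr2 hcond
  have haω_lb : -(4 * b ^ 2 * ρ ^ 2 / (μ ^ 3 * m)) ≤ a + ω := by
    rw [ha_def, hω_def, ← hm_def] at *
    exact hmain.1
  have haω_ub : a + ω ≤ 0 := by
    rw [ha_def, hω_def, ← hm_def] at *
    exact hmain.2
  have hωpos : 0 < ω := by rw [hω_def]; positivity
  have ha_neg : a ≤ 0 := by linarith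
  -- pointwise norm identity
  have hnu : nuH ρ u b μ n = ((a : ℝ) : ℂ) + Complex.I * ((u * (n : ℝ) : ℝ) : ℂ) := by
    rw [nuH, if_pos hcond]
  set D : ℝ := 4 * b ^ 2 * ρ ^ 2 * T / (μ ^ 3 * m) with hD_def
  have hDpos : 0 < D := by rw [hD_def]; positivity
  have hpt : ∀ t ∈ Set.Icc (0:ℝ) T,
      ‖Complex.exp (nuH ρ u b μ n * ((T : ℂ) - (t : ℂ)))
        - Complex.exp ((Complex.I * (u : ℂ) * (n : ℂ) - ((ω : ℝ) : ℂ))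
            * ((T : ℂ) - (t : ℂ)))‖ ^ 2 ≤ D ^ 2 := by
    intro t ht
    set s : ℝ := T - t with hs_def
    have hs0 : 0 ≤ s := by rw [hs_def]; linarith [ht.2]
    have hsT : s ≤ T := by rw [hs_def]; linarith [ht.1]
    have hnorm : ‖Complex.exp (nuH ρ u b μ n * ((T : ℂ) - (t : ℂ)))
        - Complex.exp ((Complex.I * (u : ℂ) * (n : ℂ) - ((ω : ℝ) : ℂ))
            * ((T : ℂ) - (t : ℂ)))‖
        = |Real.exp (a * s) - Real.exp (-(ω * s))| := by
      have e1 : nuH ρ u b μ n * ((T : ℂ) - (t : ℂ))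
          = ((a * s : ℝ) : ℂ) + ((u * (n : ℝ) * s : ℝ) : ℂ) * Complex.I := by
        rw [hnu, hs_def]; push_cast; ring
      have e2 : (Complex.I * (u : ℂ) * (n : ℂ) - ((ω : ℝ) : ℂ)) * ((T : ℂ) - (t : ℂ))
          = ((-(ω * s) : ℝ) : ℂ) + ((u * (n : ℝ) * s : ℝ) : ℂ) * Complex.I := by
        rw [hs_def]; push_cast; ring
      rw [e1, e2, Complex.exp_add, Complex.exp_add, ← sub_mul, norm_mul]
      have h1 : ‖Complex.exp (((u * (n : ℝ) * s : ℝ) : ℂ) * Complex.I)‖ = 1 := by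
        rw [Complex.norm_exp]; simp
      rw [h1, mul_one, ← Complex.ofReal_exp, ← Complex.ofReal_exp, ← Complex.ofReal_sub,
        Complex.norm_real, Real.norm_eq_abs]
    rw [hnorm]
    have hbound : |Real.exp (a * s) - Real.exp (-(ω * s))| ≤ D := by
      have h2 := aux_exp_lipschitz (a * s) (-(ω * s))
        (mul_nonpos_of_nonpos_of_nonneg ha_neg hs0)
        (by simp only [neg_nonpos]; positivity)
      have h3 : |a * s - -(ω * s)| = |a + ω| * s := by
        rw [show a * s - -(ω * s) = (a + ω) * s by ring, abs_mul, _root_.abs_of_nonneg hs0]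
      have h4 : |a + ω| ≤ 4 * b ^ 2 * ρ ^ 2 / (μ ^ 3 * m) := by
        rw [abs_le]
        exact ⟨by linarith, by linarith [le_trans haω_ub (le_of_lt (by positivity : (0:ℝ) < 4 * b ^ 2 * ρ ^ 2 / (μ ^ 3 * m)))]⟩
      calc |Real.exp (a * s) - Real.exp (-(ω * s))| ≤ |a + ω| * s := h3 ▸ h2
        _ ≤ (4 * b ^ 2 * ρ ^ 2 / (μ ^ 3 * m)) * T := mul_le_mul h4 hsT hs0 (by positivity)
        _ = D := by rw [hD_def]; ring
    exact pow_le_pow_left₀ (abs_nonneg _) hbound 2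
  have hcont : Continuous fun t : ℝ =>
      ‖Complex.exp (nuH ρ u b μ n * ((T : ℂ) - (t : ℂ)))
        - Complex.exp ((Complex.I * (u : ℂ) * (n : ℂ) - ((ω : ℝ) : ℂ))
            * ((T : ℂ) - (t : ℂ)))‖ ^ 2 := by
    fun_prop
  have hint : (∫ t in (0:ℝ)..T,
      ‖Complex.exp (nuH ρ u b μ n * ((T : ℂ) - (t : ℂ)))
        - Complex.exp ((Complex.I * (u : ℂ) * (n : ℂ) - ((ω : ℝ) : ℂ))
            * ((T : ℂ) - (t : ℂ)))‖ ^ 2)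
      ≤ ∫ _t in (0:ℝ)..T, D ^ 2 :=
    intervalIntegral.integral_mono_on hT.le
      (hcont.intervalIntegrable 0 T) intervalIntegrable_const hpt
  have hconst : (∫ _t in (0:ℝ)..T, D ^ 2) = T * D ^ 2 := by
    rw [intervalIntegral.integral_const]; simp [smul_eq_mul]
  have hfinal : T * D ^ 2 ≤ (4 * b ^ 2 * ρ ^ 2 * T / μ ^ 3) ^ 2 * T / m := by
    have e : T * D ^ 2 = (4 * b ^ 2 * ρ ^ 2 * T / μ ^ 3) ^ 2 * T / m ^ 2 := by
      rw [hD_def]; field_simp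
    rw [e]
    apply div_le_div_of_nonneg_left (by positivity) hmpos
    nlinarith [hm1]
  exact le_trans (hconst ▸ hint) hfinal
end
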